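/- arXiv:1105.4274 — 3 statements merged into one kernel-verified Lean document; each statement's English description precedes it below -/
import Mathlib

section
/- If a sequence {x_n : n ≥ 1} of finite binary strings satisfies ∑_{n=1}^∞ 2^{-l(x_n)} < ∞ and an infinite binary sequence ω has x_n as a prefix for infinitely many n, then ω is not Martin-Löf random with respect to the uniform measure. -/
open MeasureTheory Filter Asymptotics
open scoped ENNReal

/-- The length-`n` prefix of an infinite binary sequence, as a list. -/
def pref (ω : ℕ → Bool) (n : ℕ) : List Bool := (List.range n).map ω

/-- `a` is a (finite) prefix of the infinite sequence `ω`. -/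
def PrefixOf (a : List Bool) (ω : ℕ → Bool) : Prop := pref ω a.length = a

/-- The cylinder set of infinite sequences extending the string `x`. -/
def Cyl (x : List Bool) : Set (ℕ → Bool) := {ω | PrefixOf x ω}

/-- Plain Kolmogorov complexity of `x` with respect to a decoding function `U`. -/
noncomputable def PC (U : List Bool →. List Bool) (x : List Bool) : ℕ :=
  sInf {n | ∃ p : List Bool, p.length = n ∧ x ∈ U p}

/-- `U` is an optimal (universal) partial computable decoding function for plain complexity. -/
def PlainOptimal (U : List Bool →. List Bool) : Prop :=
  Partrec U ∧
    ∀ V : List Bool →. List Bool, Partrec V → ∃ c : ℕ, ∀ x p : List Bool,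
      x ∈ V p → PC U x ≤ p.length + c

/-- An r.e. monotone machine representation: `R p x` means that on program `p`
the machine (eventually) outputs an extension of `x`. -/
def MonotoneRepr (R : List Bool → List Bool → Prop) : Prop :=
  REPred (fun q : List Bool × List Bool => R q.1 q.2) ∧
  (∀ p x p' x', R p x → R p' x' → p <+: p' → (x <+: x' ∨ x' <+: x)) ∧
  (∀ p x x', R p x → x' <+: x → R p x')

/-- Monotone complexity with respect to a monotone machine representation `R`. -/
noncomputable def KmR (R : List Bool → List Bool → Prop) (x : List Bool) : ℕ :=
  sInf {n | ∃ p : List Bool, p.length = n ∧ R p x}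

/-- `R` is an optimal monotone machine, so `KmR R` is the monotone complexity `Km`. -/
def MonotoneOptimal (R : List Bool → List Bool → Prop) : Prop :=
  MonotoneRepr R ∧
    ∀ R', MonotoneRepr R' → ∃ c : ℕ, ∀ x p : List Bool, R' p x → KmR R x ≤ p.length + c

/-- ω is Martin-Löf random w.r.t. the measure μ: it escapes every Martin-Löf test,
a test being a computable family of (effectively open) unions of cylinders of measure ≤ 2^{-n}. -/
def MLRandom (μ : Measure (ℕ → Bool)) (ω : ℕ → Bool) : Prop :=
  ∀ f : ℕ → ℕ → List Bool, Computable₂ f →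
    (∀ n : ℕ, μ (⋃ i, Cyl (f n i)) ≤ (2 : ℝ≥0∞)⁻¹ ^ n) →
    ∃ n : ℕ, ω ∉ ⋃ i, Cyl (f n i)

/-! ### Auxiliary material for `stmt_2` -/

section Aux

/-! #### Prefix lemmas -/

lemma pref_take {m n : ℕ} (h : m ≤ n) (ω : ℕ → Bool) : pref ω m = (pref ω n).take m := by
  simp [pref, ← List.map_take, List.take_range, Nat.min_eq_left h]

lemma prefixOf_nil (ω : ℕ → Bool) : PrefixOf [] ω := rfl

lemma prefixOf_mono {a b : List Bool} {ω : ℕ → Bool} (hab : a <+: b) (hb : PrefixOf b ω) :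
    PrefixOf a ω := by
  unfold PrefixOf at *
  rw [pref_take hab.length_le, hb, ← List.prefix_iff_eq_take.mp hab]

lemma prefixOf_comparable {a b : List Bool} {ω : ℕ → Bool} (ha : PrefixOf a ω)
    (hb : PrefixOf b ω) (h : a.length ≤ b.length) : a <+: b := by
  rw [List.prefix_iff_eq_take]
  rw [← hb, ← pref_take h, ha]

lemma prefixOf_iff {a : List Bool} {ω : ℕ → Bool} :
    PrefixOf a ω ↔ ∀ k, k < a.length → ω k = a.getD k false := by
  constructor
  · intro h k hk
    conv_rhs => rw [← h]
    rw [List.getD_eq_getElem _ _ (by simpa [pref] using hk)]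
    simp [pref]
  · intro h
    apply List.ext_getElem (by simp [pref])
    intro k h1 h2
    simp only [pref, List.getElem_map, List.getElem_range]
    rw [h k h2, List.getD_eq_getElem _ _ h2]

lemma measurableSet_cyl (a : List Bool) : MeasurableSet (Cyl a) := by
  have : Cyl a = ⋂ (k : ℕ) (_ : k < a.length), {ω : ℕ → Bool | ω k = a.getD k false} := by
    ext ω; simp [Cyl, Set.mem_iInter, prefixOf_iff]
  rw [this]
  exact MeasurableSet.iInter fun k => MeasurableSet.iInter fun _ =>
    (measurable_pi_apply k) (measurableSet_singleton _)

/-! #### The longest string in a list -/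

def maxLen (L : List (List Bool)) : List Bool :=
  L.foldl (fun acc s => if acc.length ≤ s.length then s else acc) []

private lemma foldl_mem : ∀ (L : List (List Bool)) (acc : List Bool),
    L.foldl (fun acc s => if acc.length ≤ s.length then s else acc) acc = acc ∨
    L.foldl (fun acc s => if acc.length ≤ s.length then s else acc) acc ∈ L := by
  intro L
  induction L with
  | nil => intro acc; simp
  | cons s t ih =>
    intro acc
    simp only [List.foldl_cons]
    rcases ih (if acc.length ≤ s.length then s else acc) with h | h
    · rw [h]; split
      · right; simp
      · left; rfl
    · right; simp [h]

private lemma foldl_le : ∀ (L : List (List Bool)) (acc : List Bool),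
    acc.length ≤ (L.foldl (fun acc s => if acc.length ≤ s.length then s else acc) acc).length ∧
    ∀ s ∈ L, s.length ≤ (L.foldl (fun acc s => if acc.length ≤ s.length then s else acc) acc).length := by
  intro L
  induction L with
  | nil => intro acc; simp
  | cons s t ih =>
    intro acc
    simp only [List.foldl_cons]
    obtain ⟨h1, h2⟩ := ih (if acc.length ≤ s.length then s else acc)
    constructor
    · refine le_trans ?_ h1
      split <;> omega
    · intro u hu
      rcases List.mem_cons.mp hu with rfl | hu
      · refine le_trans ?_ h1; split <;> omega
      · exact h2 u hu

lemma maxLen_mem (L : List (List Bool)) : maxLen L = [] ∨ maxLen L ∈ L := foldl_mem L []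

lemma maxLen_le {L : List (List Bool)} {s : List Bool} (h : s ∈ L) :
    s.length ≤ (maxLen L).length := (foldl_le L []).2 s h

/-! #### Encoding finite sets of naturals by lists -/

def idxL : List ℕ → List ℕ
  | [] => []
  | a :: t => a :: (idxL t).map (· + (a + 1))

lemma idxL_nodup (l : List ℕ) : (idxL l).Nodup := by
  induction l with
  | nil => simp [idxL]
  | cons a t ih =>
    simp only [idxL, List.nodup_cons]
    constructor
    · intro h
      obtain ⟨b, _, hb⟩ := List.mem_map.mp h
      omega
    · exact ih.map (fun u v h => by omega)

lemma idxL_surj_aux : ∀ (n : ℕ) (s : List ℕ), s.length = n → s.Pairwise (· < ·) →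
    ∃ l, idxL l = s := by
  intro n
  induction n with
  | zero => intro s hlen _; rw [List.length_eq_zero_iff] at hlen; exact ⟨[], by simp [hlen, idxL]⟩
  | succ n ih =>
    rintro (_ | ⟨a, t⟩) hlen hs
    · simp at hlen
    · rw [List.pairwise_cons] at hs
      obtain ⟨ha, ht⟩ := hs
      have ht' : (t.map (· - (a + 1))).Pairwise (· < ·) := by
        rw [List.pairwise_map]
        refine ht.imp_of_mem ?_
        intro u v hu hv huv
        have := ha u hu
        omega
      obtain ⟨l', hl'⟩ := ih _ (by simpa using Nat.succ_injective hlen) ht'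
      refine ⟨a :: l', ?_⟩
      simp only [idxL, hl', List.map_map]
      congr 1
      rw [show ((· + (a+1)) ∘ (· - (a+1))) = fun u : ℕ => u - (a+1) + (a+1) from rfl]
      rw [List.map_congr_left (g := id) ?_, List.map_id]
      intro u hu
      have := ha u hu
      simp; omega

lemma idxL_surj (s : List ℕ) (hs : s.Pairwise (· < ·)) : ∃ l, idxL l = s :=
  idxL_surj_aux s.length s rfl hs

/-! #### The Solovay-to-ML test and its computability -/

/-- Boolean prefix check. -/
def pchk (s t : List Bool) : Bool :=
  decide (s.length ≤ t.length) &&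
    (List.range s.length).all fun k => s.getD k false == t.getD k false

lemma pchk_iff {s t : List Bool} : pchk s t = true ↔ s <+: t := by
  simp only [pchk, Bool.and_eq_true, decide_eq_true_eq, List.all_eq_true, List.mem_range,
    beq_iff_eq]
  constructor
  · rintro ⟨hle, h⟩
    rw [List.prefix_iff_eq_take]
    apply List.ext_getElem (by simp [Nat.min_eq_left hle])
    intro k h1 h2
    have hk : k < s.length := h1
    rw [List.getElem_take]
    have := h k hk
    rw [List.getD_eq_getElem _ _ hk, List.getD_eq_getElem _ _ (lt_of_lt_of_le hk hle)] at this
    exact this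
  · intro h
    refine ⟨h.length_le, fun k hk => ?_⟩
    rw [List.getD_eq_getElem _ _ hk, List.getD_eq_getElem _ _ (lt_of_lt_of_le hk h.length_le)]
    exact List.IsPrefix.getElem h hk

/-- The check performed by the test on `p = (n, i, L)`. -/
def chkG (N : ℕ) (p : ℕ × ℕ × List (List Bool)) : Bool :=
  (p.2.2.length == 2 ^ (N + p.1 + 1)) && p.2.2.all fun s => pchk s (maxLen p.2.2)

/-- The string output for `p = (n, i, L)`. -/
def outG (N : ℕ) (p : ℕ × ℕ × List (List Bool)) : List Bool :=
  bif chkG N p then maxLen p.2.2 else (List.range (p.1 + p.2.1 + 2)).map fun _ => false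

/-- Decode `i` to a duplicate-free list of indices and map `x` over it. -/
def LiF (x : ℕ → List Bool) (i : ℕ) : List (List Bool) :=
  (idxL (Denumerable.ofNat (List ℕ) i)).map x

/-- The Martin-Löf test derived from a Solovay test `x` with bound `2 ^ N`. -/
def solF (x : ℕ → List Bool) (N : ℕ) (n i : ℕ) : List Bool :=
  outG N (n, i, LiF x i)

lemma all_eq_foldr {β : Type*} (q : β → Bool) : ∀ l : List β,
    l.all q = l.foldr (fun b acc => q b && acc) true := by
  intro l; induction l with
  | nil => rfl
  | cons b t ih => simp [List.all_cons, ih]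

lemma primrec_list_all {α β : Type*} [Primcodable α] [Primcodable β]
    {f : α → List β} {p : α → β → Bool} (hf : Primrec f) (hp : Primrec₂ p) :
    Primrec fun a => (f a).all (p a) := by
  have : Primrec fun a => (f a).foldr (fun b acc => p a b && acc) true :=
    Primrec.list_foldr hf (.const true)
      (((Primrec.dom_bool₂ (· && ·)).comp (hp.comp .fst (Primrec.fst.comp .snd))
        (Primrec.snd.comp .snd)).to₂)
  exact this.of_eq fun a => (all_eq_foldr (p a) (f a)).symm

lemma primrec_maxLen : Primrec maxLen :=
  Primrec.list_foldl .id (.const ([] : List Bool))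
    ((Primrec.ite
      (Primrec.nat_le.comp (Primrec.list_length.comp (Primrec.fst.comp .snd))
        (Primrec.list_length.comp (Primrec.snd.comp .snd)))
      (Primrec.snd.comp .snd) (Primrec.fst.comp .snd)).to₂)

lemma primrec_pchk : Primrec₂ pchk :=
  (Primrec.dom_bool₂ (· && ·)).comp
    (Primrec.nat_le.decide.comp (Primrec.list_length.comp .fst) (Primrec.list_length.comp .snd))
    (primrec_list_all (Primrec.list_range.comp (Primrec.list_length.comp .fst))
      (Primrec.beq.comp ((Primrec.list_getD false).comp (Primrec.fst.comp .fst) .snd)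
        ((Primrec.list_getD false).comp (Primrec.snd.comp .fst) .snd)))

lemma primrec_idxL : Primrec idxL := by
  have h : Primrec fun l : List ℕ =>
      @List.rec ℕ (fun _ => List ℕ) [] (fun b _ IH => b :: IH.map (· + (b + 1))) l := by
    have := Primrec.list_rec (f := @id (List ℕ)) (g := fun _ => ([] : List ℕ))
      (h := fun (_ : List ℕ) (q : ℕ × List ℕ × List ℕ) => q.1 :: q.2.2.map (· + (q.1 + 1)))
      .id (.const []) ?_
    · exact this.of_eq fun l => by
        induction l with
        | nil => rfl
        | cons a t ih => simp [ih]
    · exact (Primrec.list_cons.comp (Primrec.fst.comp .snd)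
        (Primrec.list_map (Primrec.snd.comp (Primrec.snd.comp .snd))
          ((Primrec.nat_add.comp .snd
            (Primrec.succ.comp (Primrec.fst.comp (Primrec.snd.comp .fst)))).to₂))).to₂
  exact h.of_eq fun l => by
    induction l with
    | nil => rfl
    | cons a t ih => simp [idxL, ← ih]

lemma primrec_chkG (N : ℕ) : Primrec (chkG N) :=
  (Primrec.dom_bool₂ (· && ·)).comp
    (Primrec.beq.comp (Primrec.list_length.comp (Primrec.snd.comp .snd))
      ((Primrec₂.unpaired'.1 Nat.Primrec.pow).comp (Primrec.const 2)
        (Primrec.succ.comp (Primrec.nat_add.comp (Primrec.const N) .fst))))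
    (primrec_list_all (Primrec.snd.comp .snd)
      (primrec_pchk.comp .snd (primrec_maxLen.comp (Primrec.snd.comp (Primrec.snd.comp .fst)))))

lemma primrec_outG (N : ℕ) : Primrec (outG N) :=
  Primrec.cond (primrec_chkG N) (primrec_maxLen.comp (Primrec.snd.comp .snd))
    (Primrec.list_map
      (Primrec.list_range.comp
        (Primrec.succ.comp (Primrec.succ.comp
          (Primrec.nat_add.comp .fst (Primrec.fst.comp .snd)))))
      (Primrec.const false).to₂)

lemma computable_list_map_x {x : ℕ → List Bool} (hx : Computable x) :
    Computable fun l : List ℕ => l.map x := by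
  have h := Computable.nat_rec (f := fun l : List ℕ => l.length)
    (g := fun _ : List ℕ => ([] : List (List Bool)))
    (h := fun (l : List ℕ) (q : ℕ × List (List Bool)) => q.2 ++ [x (l.getD q.1 0)])
    (Primrec.list_length.to_comp) (.const [])
    (Computable.list_append.comp (Computable.snd.comp .snd)
      (Computable.list_cons.comp
        (hx.comp ((Primrec.list_getD 0).to_comp.comp .fst (Computable.fst.comp .snd)))
        (.const [])))
  refine h.of_eq fun l => ?_
  suffices H : ∀ k, k ≤ l.length →
      Nat.rec (motive := fun _ => List (List Bool)) []
        (fun y IH => IH ++ [x (l.getD y 0)]) k = (l.take k).map x by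
    simpa using H l.length le_rfl
  intro k hk
  induction k with
  | zero => simp
  | succ k ih =>
    have hk' : k < l.length := hk
    have step : (Nat.rec [] (fun y IH => IH ++ [x (l.getD y 0)]) (k+1) : List (List Bool))
        = Nat.rec [] (fun y IH => IH ++ [x (l.getD y 0)]) k ++ [x (l.getD k 0)] := rfl
    rw [step, List.take_succ, List.map_append, ih (le_of_lt hk'), List.getElem?_eq_getElem hk']
    simp [List.getD, List.getElem?_eq_getElem hk']

lemma computable₂_solF {x : ℕ → List Bool} (hx : Computable x) (N : ℕ) :
    Computable₂ (solF x N) := by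
  have hmap : Computable (LiF x) :=
    (computable_list_map_x hx).comp (primrec_idxL.to_comp.comp (Computable.ofNat (List ℕ)))
  exact (primrec_outG N).to_comp.comp
    (Computable.pair .fst (Computable.pair .snd (hmap.comp .snd)))

/-! #### Measure-theoretic estimates -/

lemma half_pow (L : ℕ) : ((2 : ℝ≥0∞)⁻¹ ^ L) = ENNReal.ofReal ((2 : ℝ) ^ (-(L : ℤ))) := by
  rw [zpow_neg, zpow_natCast, ← ENNReal.inv_pow]
  rw [ENNReal.ofReal_inv_of_pos (by positivity)]
  congr 1
  rw [ENNReal.ofReal_pow (by norm_num)]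
  norm_num

lemma junk_sum (n : ℕ) : (∑' i : ℕ, (2 : ℝ≥0∞)⁻¹ ^ (n + i + 2)) = (2 : ℝ≥0∞)⁻¹ ^ (n + 1) := by
  have : ∀ i : ℕ, (2 : ℝ≥0∞)⁻¹ ^ (n + i + 2) = (2:ℝ≥0∞)⁻¹ ^ (n + 2) * (2:ℝ≥0∞)⁻¹ ^ i := by
    intro i; rw [← pow_add]; ring_nf
  rw [tsum_congr this, ENNReal.tsum_mul_left, ENNReal.tsum_geometric]
  rw [ENNReal.one_sub_inv_two]
  rw [pow_succ, pow_succ, mul_assoc]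
  rw [ENNReal.mul_inv_cancel (by norm_num) (by norm_num), mul_one]

lemma counting_bound {μ : Measure (ℕ → Bool)} (C : ℕ → Set (ℕ → Bool))
    (hC : ∀ j, MeasurableSet (C j)) {U : Set (ℕ → Bool)} (hU : MeasurableSet U) (M : ℕ)
    (hpt : ∀ ω' ∈ U, ∃ T : Finset ℕ, T.card = M ∧ ∀ j ∈ T, ω' ∈ C j) :
    (M : ℝ≥0∞) * μ U ≤ ∑' j, μ (C j) := by
  have h1 : ∀ ω', U.indicator (fun _ => (M : ℝ≥0∞)) ω' ≤ ∑' j, (C j).indicator 1 ω' := by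
    intro ω'
    by_cases hω : ω' ∈ U
    · rw [Set.indicator_of_mem hω]
      obtain ⟨T, hT, hmem⟩ := hpt ω' hω
      have h2 : ∑ j ∈ T, (C j).indicator (1 : (ℕ → Bool) → ℝ≥0∞) ω' = ∑ j ∈ T, 1 :=
        Finset.sum_congr rfl (fun j hj => by simp [Set.indicator_of_mem (hmem j hj)])
      have : (M : ℝ≥0∞) = ∑ j ∈ T, (C j).indicator 1 ω' := by
        rw [h2, Finset.sum_const, hT, nsmul_eq_mul, mul_one]
      rw [this]
      exact ENNReal.sum_le_tsum T
    · simp [Set.indicator_of_notMem hω]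
  calc (M : ℝ≥0∞) * μ U = ∫⁻ ω', U.indicator (fun _ => (M : ℝ≥0∞)) ω' ∂μ := by
        rw [lintegral_indicator_const hU]
    _ ≤ ∫⁻ ω', ∑' j, (C j).indicator 1 ω' ∂μ := lintegral_mono h1
    _ = ∑' j, ∫⁻ ω', (C j).indicator 1 ω' ∂μ :=
        lintegral_tsum fun j => (measurable_const.indicator (hC j)).aemeasurable
    _ = ∑' j, μ (C j) := tsum_congr fun j => lintegral_indicator_one (hC j)

end Aux

/-- failing a Solovay test implies non-Martin-Löf-randomness. -/
theorem stmt_2 (μ : Measure (ℕ → Bool)) (hμ : ∀ x : List Bool, μ (Cyl x) = (2 : ℝ≥0∞)⁻¹ ^ x.length)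
    (x : ℕ → List Bool) (hx : Computable x)
    (hsum : Summable fun n => (2 : ℝ) ^ (-((x n).length : ℤ)))
    (ω : ℕ → Bool) (hio : {n | PrefixOf (x n) ω}.Infinite) :
    ¬ MLRandom μ ω := by
  classical
  -- the total (finite) weight of the Solovay test
  set C : ℝ≥0∞ := ∑' j, μ (Cyl (x j)) with hCdef
  have hμx : ∀ j : ℕ, μ (Cyl (x j)) = ENNReal.ofReal ((2 : ℝ) ^ (-(((x j).length : ℕ) : ℤ))) :=
    fun j => by rw [hμ, half_pow]
  have hCfin : C ≠ ⊤ := by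
    rw [hCdef, tsum_congr hμx,
      ← ENNReal.ofReal_tsum_of_nonneg (fun j => by positivity) hsum]
    exact ENNReal.ofReal_ne_top
  obtain ⟨N, hN⟩ := ENNReal.exists_nat_gt hCfin
  have hCN : C ≤ (2 : ℝ≥0∞) ^ N := by
    refine le_trans hN.le ?_
    have h1 : (N : ℝ≥0∞) ≤ ((2 ^ N : ℕ) : ℝ≥0∞) := Nat.cast_le.mpr (Nat.lt_two_pow_self (n := N)).le
    simpa [Nat.cast_pow] using h1
  -- membership in every level of the test
  have hmem : ∀ n : ℕ, ω ∈ ⋃ i, Cyl (solF x N n i) := by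
    intro n
    obtain ⟨T, hTsub, hTcard⟩ := hio.exists_subset_card_eq (2 ^ (N + n + 1))
    obtain ⟨l, hl⟩ := idxL_surj (T.sort (· ≤ ·)) (Finset.sortedLT_sort T).pairwise
    set i := Encodable.encode l with hidef
    have hLi : LiF x i = (T.sort (· ≤ ·)).map x := by
      rw [LiF, hidef, Denumerable.ofNat_encode, hl]
    have hpre : ∀ u ∈ LiF x i, PrefixOf u ω := by
      intro u hu
      rw [hLi] at hu
      obtain ⟨j, hj, rfl⟩ := List.mem_map.mp hu
      exact hTsub ((Finset.mem_sort _).mp hj)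
    have hmaxpre : PrefixOf (maxLen (LiF x i)) ω := by
      rcases maxLen_mem (LiF x i) with h | h
      · rw [h]; exact prefixOf_nil ω
      · exact hpre _ h
    have hlen : (LiF x i).length = 2 ^ (N + n + 1) := by
      rw [hLi, List.length_map, Finset.length_sort, hTcard]
    have hchk : chkG N (n, i, LiF x i) = true := by
      simp only [chkG, Bool.and_eq_true, beq_iff_eq, List.all_eq_true]
      exact ⟨hlen, fun u hu => pchk_iff.mpr
        (prefixOf_comparable (hpre u hu) hmaxpre (maxLen_le hu))⟩
    refine Set.mem_iUnion.mpr ⟨i, ?_⟩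
    show PrefixOf (solF x N n i) ω
    simpa [solF, outG, hchk] using hmaxpre
  -- the measure bound for every level of the test
  have hbound : ∀ n : ℕ, μ (⋃ i, Cyl (solF x N n i)) ≤ (2 : ℝ≥0∞)⁻¹ ^ n := by
    intro n
    set Ug : Set (ℕ → Bool) :=
      ⋃ i, ⋃ (_ : chkG N (n, i, LiF x i) = true), Cyl (maxLen (LiF x i)) with hUg
    set Uj : Set (ℕ → Bool) :=
      ⋃ i, Cyl ((List.range (n + i + 2)).map fun _ => false) with hUj
    have hsub : (⋃ i, Cyl (solF x N n i)) ⊆ Ug ∪ Uj := by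
      refine Set.iUnion_subset fun i => ?_
      by_cases h : chkG N (n, i, LiF x i) = true
      · intro ω' hω'
        refine Or.inl (Set.mem_iUnion.mpr ⟨i, Set.mem_iUnion.mpr ⟨h, ?_⟩⟩)
        simpa [solF, outG, h] using hω'
      · intro ω' hω'
        refine Or.inr (Set.mem_iUnion.mpr ⟨i, ?_⟩)
        rw [Bool.not_eq_true] at h
        simpa [solF, outG, h] using hω'
    have hUgm : MeasurableSet Ug :=
      MeasurableSet.iUnion fun i => MeasurableSet.iUnion fun _ => measurableSet_cyl _
    -- good part
    have hgood : μ Ug ≤ (2 : ℝ≥0∞)⁻¹ ^ (n + 1) := by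
      have hcount : ((2 ^ (N + n + 1) : ℕ) : ℝ≥0∞) * μ Ug ≤ C := by
        refine counting_bound (fun j => Cyl (x j)) (fun j => measurableSet_cyl _) hUgm _ ?_
        intro ω' hω'
        obtain ⟨i, hi⟩ := Set.mem_iUnion.mp hω'
        obtain ⟨hchk, hcyl⟩ := Set.mem_iUnion.mp hi
        obtain ⟨hlen, hall⟩ := by
          simpa only [chkG, Bool.and_eq_true, beq_iff_eq, List.all_eq_true] using hchk
        refine ⟨(idxL (Denumerable.ofNat (List ℕ) i)).toFinset, ?_, ?_⟩
        · rw [List.toFinset_card_of_nodup (idxL_nodup _)]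
          have := hlen
          rwa [LiF, List.length_map] at this
        · intro j hj
          have hj' : j ∈ idxL (Denumerable.ofNat (List ℕ) i) := List.mem_toFinset.mp hj
          have hxj : x j ∈ LiF x i := List.mem_map_of_mem hj'
          have h1 : x j <+: maxLen (LiF x i) := pchk_iff.mp (hall _ hxj)
          exact prefixOf_mono h1 hcyl
      have h2K : ((2 ^ (N + n + 1) : ℕ) : ℝ≥0∞) = (2 : ℝ≥0∞) ^ (N + n + 1) := by
        simp [Nat.cast_pow]
      rw [h2K] at hcount
      have hmu : μ Ug ≤ (2 : ℝ≥0∞)⁻¹ ^ (N + n + 1) * (2 : ℝ≥0∞) ^ N := by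
        have h3 : (2 : ℝ≥0∞)⁻¹ ^ (N + n + 1) * ((2 : ℝ≥0∞) ^ (N + n + 1) * μ Ug)
            ≤ (2 : ℝ≥0∞)⁻¹ ^ (N + n + 1) * (2 : ℝ≥0∞) ^ N :=
          mul_le_mul_right (le_trans hcount hCN) _
        have h4 : (2 : ℝ≥0∞)⁻¹ ^ (N + n + 1) * ((2 : ℝ≥0∞) ^ (N + n + 1) * μ Ug) = μ Ug := by
          rw [← mul_assoc, ← ENNReal.inv_pow,
            ENNReal.inv_mul_cancel (by positivity) (by simp [ENNReal.pow_ne_top]), one_mul]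
        rwa [h4] at h3
      refine le_trans hmu ?_
      have hNN : (2 : ℝ≥0∞)⁻¹ ^ N * (2 : ℝ≥0∞) ^ N = 1 := by
        rw [← ENNReal.inv_pow]
        exact ENNReal.inv_mul_cancel (pow_ne_zero _ (by norm_num))
          (ENNReal.pow_ne_top (by norm_num))
      have : (2 : ℝ≥0∞)⁻¹ ^ (N + n + 1) = (2 : ℝ≥0∞)⁻¹ ^ (n + 1) * (2 : ℝ≥0∞)⁻¹ ^ N := by
        rw [← pow_add]; ring_nf
      rw [this, mul_assoc, hNN, mul_one]
    -- junk part
    have hjunk : μ Uj ≤ (2 : ℝ≥0∞)⁻¹ ^ (n + 1) := by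
      refine le_trans (measure_iUnion_le _) ?_
      have : ∀ i : ℕ, μ (Cyl ((List.range (n + i + 2)).map fun _ => false))
          = (2 : ℝ≥0∞)⁻¹ ^ (n + i + 2) := by
        intro i; rw [hμ]; simp
      rw [tsum_congr this, junk_sum]
    calc μ (⋃ i, Cyl (solF x N n i)) ≤ μ (Ug ∪ Uj) := measure_mono hsub
      _ ≤ μ Ug + μ Uj := measure_union_le _ _
      _ ≤ (2 : ℝ≥0∞)⁻¹ ^ (n + 1) + (2 : ℝ≥0∞)⁻¹ ^ (n + 1) := add_le_add hgood hjunk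
      _ = (2 : ℝ≥0∞)⁻¹ ^ n := by
          rw [pow_succ, ← mul_add, ENNReal.inv_two_add_inv_two, mul_one]
  intro hml
  obtain ⟨n, hn⟩ := hml (solF x N) (computable₂_solF hx N) hbound
  exact hn (hmem n)
end

section
/- Let ρ be a computable unbounded nondecreasing function with ρ(n) = o(n). Then every infinite binary sequence ω satisfying Km(ω^n) ≥ n − ρ(n) − O(1) obeys the strong law of large numbers: lim_{n→∞} (1/n) ∑_{i=1}^n ω_i = 1/2. -/
open MeasureTheory Filter Asymptotics
open scoped ENNReal

namespace SLLN




/-! ### basic bit-string utilities -/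

def val : List Bool → ℕ := fun l => l.foldr (fun b acc => (cond b 1 0) + 2 * acc) 0

def bitsOf (k n : ℕ) : List Bool := (List.range k).map (fun i => decide ((n / 2^i) % 2 = 1))

def sz (n : ℕ) : ℕ :=
  ((List.range (n+1)).filter (fun k => decide (2^k ≤ n))).length

@[simp] lemma val_nil : val [] = 0 := rfl
@[simp] lemma val_cons (b : Bool) (l : List Bool) :
    val (b :: l) = (cond b 1 0) + 2 * val l := rfl

lemma val_append_singleton (l : List Bool) (b : Bool) :
    val (l ++ [b]) = val l + 2 ^ l.length * (cond b 1 0) := by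
  induction l with
  | nil => cases b <;> simp [val]
  | cons a l ih => simp [val_cons, ih, pow_succ]; ring

@[simp] lemma bitsOf_length (k n : ℕ) : (bitsOf k n).length = k := by
  simp [bitsOf]

lemma val_bitsOf (k n : ℕ) : val (bitsOf k n) = n % 2 ^ k := by
  induction k with
  | zero => simp [bitsOf, val, Nat.mod_one]
  | succ k ih =>
    have : bitsOf (k+1) n = bitsOf k n ++ [decide ((n / 2^k) % 2 = 1)] := by
      simp [bitsOf, List.range_succ]
    rw [this, val_append_singleton, bitsOf_length, ih]
    have h2 : n % 2 ^ (k+1) = n % 2 ^ k + 2 ^ k * (n / 2 ^ k % 2) := by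
      rw [pow_succ, Nat.mod_mul]
    rw [h2]
    congr 1
    rcases Nat.mod_two_eq_zero_or_one (n / 2^k) with h | h <;> simp [h]

lemma sz_eq_size (n : ℕ) : sz n = Nat.size n := by
  unfold sz
  have hpred : ∀ k ∈ List.range (n+1),
      (decide (2^k ≤ n)) = (decide (k < Nat.size n)) := by
    intro k _
    have : 2^k ≤ n ↔ k < Nat.size n := by
      rw [← Nat.not_lt, ← Nat.size_le, Nat.not_le]
    simp [this]
  rw [List.filter_congr hpred]
  have hle : Nat.size n ≤ n + 1 := Nat.size_le.2 ((Nat.lt_two_pow_self (n := n)).trans_le (Nat.pow_le_pow_right (by norm_num) (by omega)))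
  -- count of k < L in range N equals L when L ≤ N
  have : ∀ (N L : ℕ), L ≤ N →
      ((List.range N).filter (fun k => decide (k < L))).length = L := by
    intro N
    induction N with
    | zero => intro L h; simp_all
    | succ N ih =>
      intro L h
      rw [List.range_succ, List.filter_append, List.length_append]
      rcases Nat.lt_or_ge L (N+1) with h' | h'
      · have hLN : L ≤ N := by omega
        rw [ih L hLN]
        simp [Nat.not_lt_of_ge (by omega : L ≤ N)]
      · have hL : L = N + 1 := le_antisymm h h'
        subst hL
        have h1 : (List.range N).filter (fun k => decide (k < N+1)) = List.range N := by
          apply List.filter_eq_self.2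
          intro k hk
          simp only [List.mem_range] at hk
          exact decide_eq_true (by omega)
        rw [h1]
        simp
  exact this (n+1) (Nat.size n) hle

lemma lt_two_pow_sz (n : ℕ) : n < 2 ^ sz n := by
  rw [sz_eq_size]; exact Nat.lt_size_self n

lemma sz_le {m k : ℕ} (h : m < 2 ^ k) : sz m ≤ k := by
  rw [sz_eq_size]; exact Nat.size_le.2 h

lemma val_bitsOf_self {k n : ℕ} (h : n < 2 ^ k) : val (bitsOf k n) = n := by
  rw [val_bitsOf]; exact Nat.mod_eq_of_lt h



def E : ℕ → List (List Bool)
  | 0 => [[]]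
  | n+1 => (E n).map (List.cons false) ++ (E n).map (List.cons true)

@[simp] lemma E_zero : E 0 = [[]] := rfl
@[simp] lemma E_succ (n : ℕ) :
    E (n+1) = (E n).map (List.cons false) ++ (E n).map (List.cons true) := rfl

def wt : List Bool → ℕ := fun l => l.foldr (fun b acc => (cond b 1 0) + acc) 0

@[simp] lemma wt_nil : wt [] = 0 := rfl
@[simp] lemma wt_cons (b : Bool) (l : List Bool) : wt (b :: l) = (cond b 1 0) + wt l := rfl

lemma wt_eq_count (l : List Bool) : wt l = l.count true := by
  induction l with
  | nil => simp
  | cons b l ih =>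
    rw [wt_cons, ih, List.count_cons]
    cases b <;> simp [Nat.add_comm]


def isDev (m n : ℕ) (x : List Bool) : Bool :=
  decide (n ≤ m * (2 * wt x - n)) || decide (n ≤ m * (n - 2 * wt x))

def devList (m n : ℕ) : List (List Bool) := (E n).filter (isDev m n)

lemma mem_E {n : ℕ} {x : List Bool} : x ∈ E n ↔ x.length = n := by
  induction n generalizing x with
  | zero => simp [List.length_eq_zero_iff]
  | succ n ih =>
    simp only [E_succ, List.mem_append, List.mem_map]
    constructor
    · rintro (⟨y, hy, rfl⟩ | ⟨y, hy, rfl⟩) <;> simp [ih.1 hy]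
    · intro hx
      cases x with
      | nil => simp at hx
      | cons b y =>
        have hy : y ∈ E n := ih.2 (by simpa using hx)
        cases b
        · exact Or.inl ⟨y, hy, rfl⟩
        · exact Or.inr ⟨y, hy, rfl⟩

lemma sum_map_const_mul {α : Type*} (l : List α) (c : ℝ) (f : α → ℝ) :
    (l.map (fun x => c * f x)).sum = c * (l.map f).sum := by
  induction l with
  | nil => simp
  | cons a l ih => simp [ih]; ring

lemma sum_pow_wt (t : ℝ) (n : ℕ) :
    ((E n).map (fun x => t ^ wt x)).sum = (1+t)^n := by
  induction n with
  | zero => simp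
  | succ n ih =>
    have h1 : (fun x : List Bool => t ^ wt (false :: x)) = fun x => t ^ wt x := by
      funext x; simp
    have h2 : (fun x : List Bool => t ^ wt (true :: x)) = fun x => t * t ^ wt x := by
      funext x; simp [pow_add]
    rw [E_succ, List.map_append, List.sum_append, List.map_map, List.map_map]
    show ((E n).map (fun x => t ^ wt (false :: x))).sum
        + ((E n).map (fun x => t ^ wt (true :: x))).sum = _
    rw [h1, h2, sum_map_const_mul, ih, pow_succ]
    ring

lemma filter_len_le_sum {α : Type*} (l : List α) (p : α → Bool) (f : α → ℝ) (b : ℝ)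
    (hb : 0 ≤ b) (hf : ∀ x ∈ l, 0 ≤ f x) (h : ∀ x ∈ l, p x = true → b ≤ f x) :
    ((l.filter p).length : ℝ) * b ≤ (l.map f).sum := by
  induction l with
  | nil => simp
  | cons a l ih =>
    have ih' := ih (fun x hx => hf x (List.mem_cons_of_mem a hx))
      (fun x hx hp => h x (List.mem_cons_of_mem a hx) hp)
    rw [List.map_cons, List.sum_cons]
    by_cases hp : p a = true
    · rw [List.filter_cons_of_pos hp, List.length_cons]
      push_cast
      have hba := h a List.mem_cons_self hp
      nlinarith [ih']
    · rw [List.filter_cons_of_neg (by simpa using hp)]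
      have := hf a List.mem_cons_self
      linarith

lemma length_filter_le_add {α : Type*} (l : List α) (p q r : α → Bool)
    (h : ∀ x ∈ l, p x = true → q x = true ∨ r x = true) :
    (l.filter p).length ≤ (l.filter q).length + (l.filter r).length := by
  induction l with
  | nil => simp
  | cons a l ih =>
    have ih' := ih (fun x hx hp => h x (List.mem_cons_of_mem a hx) hp)
    by_cases hp : p a = true <;> by_cases hq : q a = true <;> by_cases hr : r a = true <;>
        simp only [List.filter_cons, hp, hq, hr, if_true, if_false, List.length_cons,
          Bool.not_eq_true, Bool.false_eq_true, if_false] <;>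
        try omega
    rcases h a List.mem_cons_self hp with h' | h'
    · exact absurd h' (by simp [hq])
    · exact absurd h' (by simp [hr])

lemma log_one_add_ge {x : ℝ} (hx : 0 < x) : x / (1+x) ≤ Real.log (1+x) := by
  have h := Real.log_le_sub_one_of_pos (show (0:ℝ) < (1+x)⁻¹ by positivity)
  rw [Real.log_inv] at h
  have h1x : (0:ℝ) < 1 + x := by linarith
  have he : (1+x)⁻¹ - 1 = -(x/(1+x)) := by field_simp; ring
  rw [he] at h
  linarith

lemma key_ineq (m : ℕ) (hm : 1 ≤ m) :
    Real.log (1 + 1/((m:ℝ)+1)/2) < (((m:ℝ)+1)/(2*m)) * Real.log (1 + 1/((m:ℝ)+1)) := by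
  have hm1 : (1:ℝ) ≤ (m:ℝ) := by exact_mod_cast hm
  set mr := (m:ℝ) with hmr
  set x : ℝ := 1/(mr+1) with hxdef
  have hx : 0 < x := by positivity
  have h1 : Real.log (1 + x/2) ≤ x/2 := by
    have := Real.log_le_sub_one_of_pos (show (0:ℝ) < 1 + x/2 by linarith)
    linarith
  have h2 : x/(1+x) ≤ Real.log (1+x) := log_one_add_ge hx
  have hc : 0 < (mr+1)/(2*mr) := by positivity
  have h3 : x/2 < ((mr+1)/(2*mr)) * (x/(1+x)) := by
    rw [hxdef]
    have hne1 : mr + 1 ≠ 0 := by positivity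
    have hne2 : mr ≠ 0 := by positivity
    have hne3 : (0:ℝ) < 1 + 1/(mr+1) := by positivity
    rw [div_lt_iff₀ (by norm_num : (0:ℝ) < 2)] at *
    field_simp
    nlinarith
  calc Real.log (1 + x/2) ≤ x/2 := h1
    _ < ((mr+1)/(2*mr)) * (x/(1+x)) := h3
    _ ≤ ((mr+1)/(2*mr)) * Real.log (1+x) := by
        exact mul_le_mul_of_nonneg_left h2 hc.le

set_option maxHeartbeats 2000000 in
lemma devLen_bound (m : ℕ) (hm : 1 ≤ m) :
    ∃ M : ℕ, 1 ≤ M ∧ ∀ n : ℕ, (devList m n).length < 2 ^ (n + 2 - n / M) := by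
  have hm1 : (1:ℝ) ≤ (m:ℝ) := by exact_mod_cast hm
  set mr := (m:ℝ) with hmr
  set x : ℝ := 1/(mr+1) with hxdef
  have hx : 0 < x := by positivity
  set t : ℝ := 1 + x with htdef
  have ht1 : 1 < t := by simp [htdef]; positivity
  have ht0 : 0 < t := by linarith
  set coeff : ℝ := (mr+1)/(2*mr) with hcoeff
  have hcpos : 0 < coeff := by positivity
  set g : ℝ := Real.log 2 + coeff * Real.log t - Real.log (1+t) with hgdef
  have hlog1t : Real.log (1+t) = Real.log 2 + Real.log (1 + x/2) := by
    have : (1:ℝ) + t = 2 * (1 + x/2) := by rw [htdef]; ring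
    rw [this, Real.log_mul (by norm_num) (by positivity)]
  have hg : 0 < g := by
    have hk := key_ineq m hm
    rw [← hxdef] at hk
    rw [hgdef, hlog1t]
    have : Real.log t = Real.log (1+x) := by rw [htdef]
    rw [this]
    rw [← hcoeff] at hk
    linarith
  set M : ℕ := ⌈Real.log 2 / g⌉₊ + 1 with hMdef
  have hM1 : 1 ≤ M := by omega
  have hMpos : (0:ℝ) < M := by positivity
  have hMg : Real.log 2 / M ≤ g := by
    rw [div_le_iff₀ hMpos]
    have h1 : Real.log 2 / g ≤ M := by
      have := Nat.le_ceil (Real.log 2 / g)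
      push_cast [hMdef]
      push_cast at this
      linarith
    calc Real.log 2 = (Real.log 2 / g) * g := by field_simp
      _ ≤ M * g := mul_le_mul_of_nonneg_right h1 hg.le
      _ = g * M := by ring
  refine ⟨M, hM1, fun n => ?_⟩
  -- notation
  set u : ℝ := t⁻¹ with hudef
  have hu0 : 0 < u := by positivity
  have hu1 : u ≤ 1 := by
    rw [hudef, inv_le_one_iff₀]; right; linarith
  set s₁ : ℕ := (n*(m+1) + (2*m - 1))/(2*m) with hs₁
  set s₂ : ℕ := (n*(m-1))/(2*m) with hs₂
  set pHi : List Bool → Bool := fun x => decide (n*(m+1) ≤ 2*m*wt x) with hpHi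
  set pLo : List Bool → Bool := fun x => decide (2*m*wt x + n ≤ n*m) with hpLo
  set cntHi : ℕ := ((E n).filter pHi).length with hcntHi
  set cntLo : ℕ := ((E n).filter pLo).length with hcntLo
  -- step 1 : devList length ≤ cntHi + cntLo
  have hsplit : (devList m n).length ≤ cntHi + cntLo := by
    apply length_filter_le_add
    intro y _ hdev
    rw [isDev, Bool.or_eq_true, decide_eq_true_eq, decide_eq_true_eq] at hdev
    rcases hdev with hd | hd
    · by_cases hw : n ≤ 2 * wt y
      · left
        rw [hpHi]; simp only [decide_eq_true_eq]
        zify [hw] at hd ⊢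
        nlinarith
      · have h0 : 2 * wt y - n = 0 := by omega
        rw [h0, Nat.mul_zero] at hd
        have hn : n = 0 := by omega
        subst hn
        left; rw [hpHi]; simp
    · by_cases hw : 2 * wt y ≤ n
      · right
        rw [hpLo]; simp only [decide_eq_true_eq]
        zify [hw] at hd ⊢
        nlinarith
      · have h0 : n - 2 * wt y = 0 := by omega
        rw [h0, Nat.mul_zero] at hd
        have hn : n = 0 := by omega
        subst hn
        left; rw [hpHi]; simp
  -- step 2 : real tail bounds
  set e₁ : ℕ := n + 1 - n / M with he₁
  have hnM : n / M ≤ n := Nat.div_le_self n M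
  have he₁cast : (e₁ : ℝ) = (n:ℝ) + 1 - (n / M : ℕ) := by
    rw [he₁]; push_cast [Nat.cast_sub (by omega : n / M ≤ n + 1)]; ring
  have hfloorle : ((n / M : ℕ) : ℝ) ≤ (n:ℝ) / M := Nat.cast_div_le
  -- s₁ bounds
  have hs₁real : (n:ℝ) * (mr+1) / (2*mr) ≤ (s₁:ℝ) := by
    have h1 : n*(m+1) ≤ 2*m*s₁ := by
      rw [hs₁]
      have hdm := Nat.div_add_mod (n*(m+1) + (2*m - 1)) (2*m)
      have hmod := Nat.mod_lt (n*(m+1) + (2*m - 1)) (show 0 < 2*m by omega)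
      omega
    have h1' : (n:ℝ)*(mr+1) ≤ 2*mr*(s₁:ℝ) := by
      have := (Nat.cast_le (α := ℝ)).2 h1
      push_cast at this
      rw [← hmr] at this
      linarith
    rw [div_le_iff₀ (by positivity)]
    linarith
  have hs₂real : (s₂:ℝ) ≤ (n:ℝ) * (mr-1) / (2*mr) := by
    have h1 : 2*m*s₂ ≤ n*(m-1) := by
      calc 2*m*s₂ = (n*(m-1)/(2*m))*(2*m) := by rw [hs₂]; ring
        _ ≤ n*(m-1) := Nat.div_mul_le_self _ _
    have h1' : 2*mr*(s₂:ℝ) ≤ (n:ℝ)*(mr-1) := by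
      have hcast : ((n*(m-1) : ℕ) : ℝ) = (n:ℝ)*(mr-1) := by
        push_cast [Nat.cast_sub hm]
        rw [← hmr]
      calc 2*mr*(s₂:ℝ) = ((2*m*s₂ : ℕ) : ℝ) := by push_cast; ring
        _ ≤ ((n*(m-1) : ℕ) : ℝ) := by exact_mod_cast h1
        _ = (n:ℝ)*(mr-1) := hcast
    rw [le_div_iff₀ (by positivity)]
    linarith
  -- power/exp identities
  have hpowexp : ∀ (a : ℝ), 0 < a → ∀ k : ℕ, a ^ k = Real.exp (k * Real.log a) := by
    intro a ha k
    rw [← Real.log_pow, Real.exp_log (pow_pos ha k)]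
  have hlogt0 : 0 ≤ Real.log t := Real.log_nonneg ht1.le
  -- Hi bound
  have hHi : (cntHi : ℝ) < 2 ^ e₁ := by
    have hb : (cntHi : ℝ) * t ^ s₁ ≤ (1+t)^n := by
      rw [hcntHi, ← sum_pow_wt t n]
      apply filter_len_le_sum
      · positivity
      · intro z _; positivity
      · intro z _ hz
        rw [hpHi] at hz; simp only [decide_eq_true_eq] at hz
        apply pow_le_pow_right₀ ht1.le
        rw [hs₁]
        calc (n*(m+1) + (2*m - 1))/(2*m) ≤ (2*m*wt z + (2*m - 1))/(2*m) :=
              Nat.div_le_div_right (Nat.add_le_add_right hz _)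
          _ = wt z + (2*m-1)/(2*m) := by
              rw [Nat.add_comm, Nat.add_mul_div_left _ _ (show 0 < 2*m by omega)]
              omega
          _ = wt z := by rw [Nat.div_eq_of_lt (by omega), Nat.add_zero]
    have ht1p : (0:ℝ) < 1 + t := by linarith
    have hcnt : (cntHi : ℝ) ≤ Real.exp ((n:ℝ) * Real.log (1+t) - (s₁:ℝ) * Real.log t) := by
      rw [Real.exp_sub, ← hpowexp _ ht1p, ← hpowexp _ ht0]
      rw [le_div_iff₀ (pow_pos ht0 _)]
      exact hb
    have hexp : (n:ℝ) * Real.log (1+t) - (s₁:ℝ) * Real.log t < (e₁:ℝ) * Real.log 2 := by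
      have h1 : (n:ℝ) * Real.log (1+t) - (s₁:ℝ) * Real.log t
          ≤ (n:ℝ) * Real.log (1+t) - ((n:ℝ)*(mr+1)/(2*mr)) * Real.log t := by
        have := mul_le_mul_of_nonneg_right hs₁real hlogt0
        linarith
      have h2 : (n:ℝ) * Real.log (1+t) - ((n:ℝ)*(mr+1)/(2*mr)) * Real.log t
          = (n:ℝ) * (Real.log 2 - g) := by
        rw [hgdef, hcoeff]; ring
      have h3 : (n:ℝ) * (Real.log 2 - g) ≤ (n:ℝ) * Real.log 2 - (n:ℝ) * (Real.log 2 / M) := by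
        have hh := mul_le_mul_of_nonneg_left hMg (by positivity : (0:ℝ) ≤ (n:ℝ))
        linarith [hh]
      have h4 : (n:ℝ) * Real.log 2 - (n:ℝ) * (Real.log 2 / M)
          = ((n:ℝ) - (n:ℝ)/M) * Real.log 2 := by ring
      have h5 : ((n:ℝ) - (n:ℝ)/M) * Real.log 2 ≤ ((n:ℝ) - ((n / M : ℕ):ℝ)) * Real.log 2 := by
        apply mul_le_mul_of_nonneg_right _ (Real.log_nonneg one_le_two)
        linarith
      have h6 : ((n:ℝ) - ((n / M : ℕ):ℝ)) * Real.log 2 < (e₁:ℝ) * Real.log 2 := by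
        apply mul_lt_mul_of_pos_right _ (Real.log_pos one_lt_two)
        rw [he₁cast]
        linarith
      linarith
    calc (cntHi : ℝ) ≤ _ := hcnt
      _ < Real.exp ((e₁:ℝ) * Real.log 2) := Real.exp_lt_exp.2 hexp
      _ = 2 ^ e₁ := (hpowexp 2 two_pos e₁).symm
  -- Lo bound
  have hLo : (cntLo : ℝ) < 2 ^ e₁ := by
    have hb : (cntLo : ℝ) * u ^ s₂ ≤ (1+u)^n := by
      rw [hcntLo, ← sum_pow_wt u n]
      apply filter_len_le_sum
      · positivity
      · intro z _; positivity
      · intro z _ hz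
        rw [hpLo] at hz; simp only [decide_eq_true_eq] at hz
        apply pow_le_pow_of_le_one hu0.le hu1
        rw [hs₂, Nat.le_div_iff_mul_le (show 0 < 2*m by omega)]
        have e1 : wt z * (2*m) = 2*m*wt z := by ring
        have e2 : n*(m-1) = n*m - n := Nat.mul_pred n m
        rw [e1, e2]
        exact Nat.le_sub_of_add_le hz
    have hu1p : (0:ℝ) < 1 + u := by linarith
    have hloguinv : Real.log u = - Real.log t := by
      rw [hudef, Real.log_inv]
    have hcnt : (cntLo : ℝ) ≤ Real.exp ((n:ℝ) * Real.log (1+u) + (s₂:ℝ) * Real.log t) := by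
      have : (cntLo : ℝ) ≤ (1+u)^n / u ^ s₂ := by
        rw [le_div_iff₀ (pow_pos hu0 _)]
        exact hb
      calc (cntLo : ℝ) ≤ (1+u)^n / u ^ s₂ := this
        _ = Real.exp ((n:ℝ) * Real.log (1+u) + (s₂:ℝ) * Real.log t) := by
            rw [hpowexp _ hu1p, hpowexp _ hu0, ← Real.exp_sub]
            congr 1
            rw [hloguinv]
            ring
    have hlog1u : Real.log (1+u) = Real.log (1+t) - Real.log t := by
      have : (1:ℝ) + u = (1+t) * t⁻¹ := by
        rw [hudef]; field_simp
        ring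
      rw [this, Real.log_mul (by positivity) (by positivity), Real.log_inv]
      ring
    have hexp : (n:ℝ) * Real.log (1+u) + (s₂:ℝ) * Real.log t < (e₁:ℝ) * Real.log 2 := by
      have h1 : (n:ℝ) * Real.log (1+u) + (s₂:ℝ) * Real.log t
          ≤ (n:ℝ) * Real.log (1+u) + ((n:ℝ)*(mr-1)/(2*mr)) * Real.log t := by
        have := mul_le_mul_of_nonneg_right hs₂real hlogt0
        linarith
      have h2 : (n:ℝ) * Real.log (1+u) + ((n:ℝ)*(mr-1)/(2*mr)) * Real.log t
          = (n:ℝ) * (Real.log 2 - g) := by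
        rw [hlog1u, hgdef, hcoeff]
        have hmr0 : mr ≠ 0 := by positivity
        field_simp
        ring
      have h3 : (n:ℝ) * (Real.log 2 - g) ≤ (n:ℝ) * Real.log 2 - (n:ℝ) * (Real.log 2 / M) := by
        have hh := mul_le_mul_of_nonneg_left hMg (by positivity : (0:ℝ) ≤ (n:ℝ))
        linarith [hh]
      have h4 : (n:ℝ) * Real.log 2 - (n:ℝ) * (Real.log 2 / M)
          = ((n:ℝ) - (n:ℝ)/M) * Real.log 2 := by ring
      have h5 : ((n:ℝ) - (n:ℝ)/M) * Real.log 2 ≤ ((n:ℝ) - ((n / M : ℕ):ℝ)) * Real.log 2 := by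
        apply mul_le_mul_of_nonneg_right _ (Real.log_nonneg one_le_two)
        linarith
      have h6 : ((n:ℝ) - ((n / M : ℕ):ℝ)) * Real.log 2 < (e₁:ℝ) * Real.log 2 := by
        apply mul_lt_mul_of_pos_right _ (Real.log_pos one_lt_two)
        rw [he₁cast]
        linarith
      linarith
    calc (cntLo : ℝ) ≤ _ := hcnt
      _ < Real.exp ((e₁:ℝ) * Real.log 2) := Real.exp_lt_exp.2 hexp
      _ = 2 ^ e₁ := (hpowexp 2 two_pos e₁).symm
  -- combine
  have hfin : ((devList m n).length : ℝ) < 2 ^ (e₁ + 1) := by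
    have : ((devList m n).length : ℝ) ≤ (cntHi : ℝ) + (cntLo : ℝ) := by
      exact_mod_cast hsplit
    calc ((devList m n).length : ℝ) ≤ (cntHi : ℝ) + (cntLo : ℝ) := this
      _ < 2 ^ e₁ + 2 ^ e₁ := by linarith
      _ = 2 ^ (e₁ + 1) := by ring
  have hee : e₁ + 1 = n + 2 - n / M := by omega
  rw [hee] at hfin
  exact_mod_cast hfin

/-! ### the monotone machine -/

def seg (p : List Bool) (j k : ℕ) : List Bool :=
  (List.range k).map (fun i => p.getD (j+i) false)

def leading : List Bool → ℕ := fun l => l.foldr (fun b acc => cond b (acc+1) 0) 0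

def paylen (m n : ℕ) : ℕ := sz (devList m n).length

def nOf (p : List Bool) : ℕ := val (seg p (leading p + 1) (leading p))

def iOf (m : ℕ) (p : List Bool) : ℕ := val (seg p (2 * leading p + 1) (paylen m (nOf p)))

def okCode (m : ℕ) (p : List Bool) : Bool :=
  decide (p.length = 2 * leading p + 1 + paylen m (nOf p))

def result (m : ℕ) (p : List Bool) : List Bool := (devList m (nOf p)).getD (iOf m p) []

def isPre (x y : List Bool) : Bool :=
  decide (x.length ≤ y.length) && decide (seg y 0 x.length = x)

def Rm (m : ℕ) (p x : List Bool) : Bool :=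
  (List.range (p.length + 1)).any fun j =>
    okCode m (seg p 0 j) && isPre x (result m (seg p 0 j))

def Rpred (m : ℕ) (p x : List Bool) : Prop := Rm m p x = true

def enc (m n i : ℕ) : List Bool :=
  (List.replicate (sz n) true ++ [false]) ++ (bitsOf (sz n) n ++ bitsOf (paylen m n) i)

/-! ### seg lemmas -/

@[simp] lemma seg_length (p : List Bool) (j k : ℕ) : (seg p j k).length = k := by
  simp [seg]

lemma seg_eq_take_drop {p : List Bool} {j k : ℕ} (h : j + k ≤ p.length) :
    seg p j k = (p.drop j).take k := by
  apply List.ext_getElem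
  · simp only [seg_length, List.length_take, List.length_drop]
    omega
  · intro i h1 h2
    simp only [seg_length] at h1
    simp only [seg, List.getElem_map, List.getElem_range]
    rw [List.getElem_take, List.getElem_drop]
    rw [List.getD_eq_getElem _ _ (by omega)]

lemma seg_zero {p : List Bool} {j : ℕ} (h : j ≤ p.length) : seg p 0 j = p.take j := by
  rw [seg_eq_take_drop (by omega), List.drop_zero]

lemma seg_of_prefix {p p' : List Bool} {j k : ℕ} (hp : p <+: p') (h : j + k ≤ p.length) :
    seg p' j k = seg p j k := by
  obtain ⟨e, rfl⟩ := hp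
  unfold seg
  apply List.map_congr_left
  intro i hi
  rw [List.mem_range] at hi
  rw [List.getD_append _ _ _ _ (by omega)]

/-! ### leading lemmas -/

@[simp] lemma leading_nil : leading [] = 0 := rfl
@[simp] lemma leading_cons (b : Bool) (l : List Bool) :
    leading (b :: l) = cond b (leading l + 1) 0 := rfl

lemma leading_le_length (p : List Bool) : leading p ≤ p.length := by
  induction p with
  | nil => simp
  | cons b l ih => cases b <;> simp <;> omega

lemma leading_replicate_append (k : ℕ) (r : List Bool) :
    leading (List.replicate k true ++ false :: r) = k := by
  induction k with
  | zero => simp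
  | succ k ih => simp [List.replicate_succ, ih]

lemma leading_spec {p : List Bool} (h : leading p < p.length) :
    p = List.replicate (leading p) true ++ false :: p.drop (leading p + 1) := by
  induction p with
  | nil => simp at h
  | cons b l ih =>
    cases b with
    | false => simp
    | true =>
      simp only [leading_cons, cond_true] at h ⊢
      have hlt : leading l < l.length := by simpa using Nat.lt_of_succ_lt_succ h
      rw [List.replicate_succ]
      simp only [List.cons_append, List.drop_succ_cons]
      exact congrArg (List.cons true) (ih hlt)

/-! ### prefix utilities -/

lemma prefix_comparable {α : Type*} {l p q : List α} (h1 : p <+: l) (h2 : q <+: l) :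
    p <+: q ∨ q <+: p := by
  rcases le_total p.length q.length with h | h
  · left
    rw [List.prefix_iff_eq_take.mp h1, List.prefix_iff_eq_take.mp h2]
    exact List.take_prefix_take_left h
  · right
    rw [List.prefix_iff_eq_take.mp h1, List.prefix_iff_eq_take.mp h2]
    exact List.take_prefix_take_left h

lemma isPre_iff {x y : List Bool} : isPre x y = true ↔ x <+: y := by
  unfold isPre
  rw [Bool.and_eq_true, decide_eq_true_eq, decide_eq_true_eq]
  constructor
  · rintro ⟨hlen, hseg⟩
    rw [seg_zero hlen] at hseg
    rw [List.prefix_iff_eq_take]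
    exact hseg.symm
  · intro h
    have hlen := h.length_le
    refine ⟨hlen, ?_⟩
    rw [seg_zero hlen]
    exact (List.prefix_iff_eq_take.mp h).symm

lemma Rpred_iff {m : ℕ} {p x : List Bool} :
    Rpred m p x ↔ ∃ q, q <+: p ∧ okCode m q = true ∧ x <+: result m q := by
  unfold Rpred Rm
  rw [List.any_eq_true]
  constructor
  · rintro ⟨j, hj, h⟩
    rw [List.mem_range] at hj
    have hjle : j ≤ p.length := by omega
    rw [Bool.and_eq_true, isPre_iff] at h
    rw [seg_zero hjle] at h
    exact ⟨p.take j, List.take_prefix j p, h.1, h.2⟩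
  · rintro ⟨q, hq, hok, hpre⟩
    refine ⟨q.length, ?_, ?_⟩
    · rw [List.mem_range]
      have := hq.length_le
      omega
    · rw [Bool.and_eq_true, isPre_iff, seg_zero hq.length_le,
        ← List.prefix_iff_eq_take.mp hq]
      exact ⟨hok, hpre⟩

/-! ### prefix-freeness of codes -/

lemma okCode_length {m : ℕ} {p : List Bool} (h : okCode m p = true) :
    p.length = 2 * leading p + 1 + paylen m (nOf p) := by
  simpa [okCode] using h

lemma okCode_prefix_eq {m : ℕ} {p p' : List Bool} (h : okCode m p = true)
    (h' : okCode m p' = true) (hp : p <+: p') : p = p' := by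
  have hl := okCode_length h
  have hl' := okCode_length h'
  have hk : leading p < p.length := by
    have := leading_le_length p
    omega
  -- structure of p
  have hstruct := leading_spec hk
  -- leading of p' equals leading of p
  obtain ⟨e, rfl⟩ := hp
  have hlead' : leading (p ++ e) = leading p := by
    conv_lhs => rw [hstruct]
    rw [List.append_assoc, List.cons_append, leading_replicate_append]
  -- nOf agree
  have hnof : nOf (p ++ e) = nOf p := by
    unfold nOf
    rw [hlead', seg_of_prefix (List.prefix_append p e) (by omega)]
  have hlen2 : (p ++ e).length = p.length := by
    rw [hl', hlead', hnof, ← hl]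
  have he : e = [] := by
    rw [List.length_append] at hlen2
    exact List.eq_nil_of_length_eq_zero (by omega)
  rw [he, List.append_nil]

/-! ### correctness of the encoding -/

lemma enc_length (m n i : ℕ) : (enc m n i).length = 2 * sz n + 1 + paylen m n := by
  simp [enc, bitsOf_length]
  omega

lemma enc_eq (m n i : ℕ) : enc m n i =
    List.replicate (sz n) true ++ false :: (bitsOf (sz n) n ++ bitsOf (paylen m n) i) := by
  simp [enc]

lemma leading_enc (m n i : ℕ) : leading (enc m n i) = sz n := by
  rw [enc_eq, leading_replicate_append]

lemma drop_enc1 (m n i : ℕ) :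
    (enc m n i).drop (sz n + 1) = bitsOf (sz n) n ++ bitsOf (paylen m n) i := by
  unfold enc
  rw [show sz n + 1 = (List.replicate (sz n) true ++ [false]).length by simp]
  exact List.drop_left

lemma nOf_enc (m n i : ℕ) : nOf (enc m n i) = n := by
  unfold nOf
  rw [leading_enc]
  rw [seg_eq_take_drop (by rw [enc_length]; omega), drop_enc1]
  rw [show (bitsOf (sz n) n ++ bitsOf (paylen m n) i).take (sz n)
      = (bitsOf (sz n) n ++ bitsOf (paylen m n) i).take (bitsOf (sz n) n).length
      by rw [bitsOf_length]]
  rw [List.take_left]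
  exact val_bitsOf_self (lt_two_pow_sz n)

lemma iOf_enc (m n i : ℕ) (hi : i < (devList m n).length) : iOf m (enc m n i) = i := by
  unfold iOf
  rw [leading_enc, nOf_enc]
  rw [seg_eq_take_drop (by rw [enc_length])]
  have hassoc : enc m n i =
      ((List.replicate (sz n) true ++ [false]) ++ bitsOf (sz n) n) ++ bitsOf (paylen m n) i := by
    rw [enc, ← List.append_assoc]
  rw [hassoc, show 2 * sz n + 1
      = ((List.replicate (sz n) true ++ [false]) ++ bitsOf (sz n) n).length
      by simp [bitsOf_length]; omega]
  rw [List.drop_left]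
  rw [show List.take (paylen m n) (bitsOf (paylen m n) i)
      = List.take (bitsOf (paylen m n) i).length (bitsOf (paylen m n) i)
      by rw [bitsOf_length]]
  rw [List.take_length]
  exact val_bitsOf_self (hi.trans (lt_two_pow_sz _))

lemma okCode_enc (m n i : ℕ) : okCode m (enc m n i) = true := by
  unfold okCode
  rw [leading_enc, nOf_enc, enc_length]
  simp

lemma result_enc (m n i : ℕ) (hi : i < (devList m n).length) :
    result m (enc m n i) = (devList m n)[i] := by
  unfold result
  rw [nOf_enc, iOf_enc m n i hi, List.getD_eq_getElem _ _ hi]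

lemma covers {m n : ℕ} {x : List Bool} (hx : x ∈ devList m n) :
    ∃ p : List Bool, Rpred m p x ∧ p.length = 2 * sz n + 1 + paylen m n := by
  obtain ⟨i, hi, rfl⟩ := List.mem_iff_getElem.mp hx
  refine ⟨enc m n i, ?_, enc_length m n i⟩
  rw [Rpred_iff]
  exact ⟨enc m n i, List.prefix_refl _, okCode_enc m n i,
    by rw [result_enc m n i hi]⟩

lemma mono2 (m : ℕ) : ∀ p x p' x', Rpred m p x → Rpred m p' x' → p <+: p' →
    (x <+: x' ∨ x' <+: x) := by
  intro p x p' x' h h' hpp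
  rw [Rpred_iff] at h h'
  obtain ⟨q, hq, hok, hx⟩ := h
  obtain ⟨q', hq', hok', hx'⟩ := h'
  have hqq : q = q' := by
    rcases prefix_comparable (hq.trans hpp) hq' with hc | hc
    · exact okCode_prefix_eq hok hok' hc
    · exact (okCode_prefix_eq hok' hok hc).symm
  subst hqq
  exact prefix_comparable hx hx'

lemma mono3 (m : ℕ) : ∀ p x x', Rpred m p x → x' <+: x → Rpred m p x' := by
  intro p x x' h hxx
  rw [Rpred_iff] at h ⊢
  obtain ⟨q, hq, hok, hx⟩ := h
  exact ⟨q, hq, hok, hxx.trans hx⟩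

/-! ### computability of the machine -/

section computability
open Primrec

lemma hpow : Primrec₂ ((· ^ ·) : ℕ → ℕ → ℕ) :=
  Primrec₂.unpaired'.mp Nat.Primrec.pow

lemma hval : Primrec val := by
  have h : Primrec (fun q : (List Bool) × Bool × ℕ => (cond q.2.1 1 0) + 2 * q.2.2) :=
    nat_add.comp (Primrec.cond (fst.comp snd) (const 1) (const 0))
      (nat_mul.comp (const 2) (snd.comp snd))
  exact (list_foldr Primrec.id (const 0) h.to₂).of_eq (fun l => rfl)

lemma hwt : Primrec wt := by
  have h : Primrec (fun q : (List Bool) × Bool × ℕ => (cond q.2.1 1 0) + q.2.2) :=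
    nat_add.comp (Primrec.cond (fst.comp snd) (const 1) (const 0)) (snd.comp snd)
  exact (list_foldr Primrec.id (const 0) h.to₂).of_eq (fun l => rfl)

lemma hleading : Primrec leading := by
  have h : Primrec (fun q : (List Bool) × Bool × ℕ => cond q.2.1 (q.2.2 + 1) 0) :=
    Primrec.cond (fst.comp snd) (succ.comp (snd.comp snd)) (const 0)
  exact (list_foldr Primrec.id (const 0) h.to₂).of_eq (fun l => rfl)

lemma hbitsOf : Primrec₂ bitsOf := by
  have inner : Primrec (fun q : (ℕ × ℕ) × ℕ => decide ((q.1.2 / 2 ^ q.2) % 2 = 1)) :=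
    PrimrecPred.decide (Primrec.eq.comp
      (nat_mod.comp (nat_div.comp (snd.comp fst) (hpow.comp (const 2) snd)) (const 2))
      (const 1))
  exact (list_map (list_range.comp fst) inner.to₂).of_eq (fun p => rfl)

lemma filterMap_guard {α : Type*} (p : α → Prop) [DecidablePred p] (l : List α) :
    l.filterMap (fun a => if p a then some a else none) = l.filter (fun a => decide (p a)) := by
  induction l with
  | nil => rfl
  | cons a l ih =>
    rw [List.filterMap_cons, List.filter_cons]
    by_cases h : p a <;> simp [h, ih]

lemma hsz : Primrec sz := by
  have inner : Primrec (fun q : ℕ × ℕ => if 2 ^ q.2 ≤ q.1 then some q.2 else none) :=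
    Primrec.ite (nat_le.comp (hpow.comp (const 2) snd) fst) (option_some.comp snd) (const none)
  have h := list_length.comp (listFilterMap (list_range.comp succ) inner.to₂)
  apply h.of_eq
  intro n
  show ((List.range (n+1)).filterMap (fun k => if 2 ^ k ≤ n then some k else none)).length = _
  rw [filterMap_guard]
  rfl

lemma hE : Primrec E := by
  have step : Primrec (fun q : ℕ × List (List Bool) =>
      q.2.map (List.cons false) ++ q.2.map (List.cons true)) :=
    list_append.comp (list_map snd ((list_cons.comp (const false) snd).to₂))
      (list_map snd ((list_cons.comp (const true) snd).to₂))
  have h := nat_rec₁ ([[]] : List (List Bool)) step.to₂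
  apply h.of_eq
  intro n
  induction n with
  | zero => rfl
  | succ k ih =>
    show _ ++ _ = E (k+1)
    rw [ih]
    rfl

lemma isDev_eq_decide (m n : ℕ) (x : List Bool) :
    isDev m n x = decide (n ≤ m * (2 * wt x - n) ∨ n ≤ m * (n - 2 * wt x)) := by
  rw [isDev]
  by_cases h1 : n ≤ m * (2 * wt x - n) <;> by_cases h2 : n ≤ m * (n - 2 * wt x) <;>
    simp [h1, h2]

lemma hdevList (m : ℕ) : Primrec (devList m) := by
  have cond : PrimrecPred (fun q : ℕ × List Bool =>
      q.1 ≤ m * (2 * wt q.2 - q.1) ∨ q.1 ≤ m * (q.1 - 2 * wt q.2)) :=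
    PrimrecPred.or
      (nat_le.comp fst (nat_mul.comp (const m)
        (nat_sub.comp (nat_mul.comp (const 2) (hwt.comp snd)) fst)))
      (nat_le.comp fst (nat_mul.comp (const m)
        (nat_sub.comp fst (nat_mul.comp (const 2) (hwt.comp snd)))))
  have inner : Primrec (fun q : ℕ × List Bool =>
      if q.1 ≤ m * (2 * wt q.2 - q.1) ∨ q.1 ≤ m * (q.1 - 2 * wt q.2) then some q.2 else none) :=
    Primrec.ite cond (option_some.comp snd) (const none)
  have h := listFilterMap hE inner.to₂
  apply h.of_eq
  intro n
  show (E n).filterMap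
      (fun x => if n ≤ m * (2 * wt x - n) ∨ n ≤ m * (n - 2 * wt x) then some x else none) = _
  rw [filterMap_guard]
  unfold devList
  apply List.filter_congr
  intro x _
  rw [isDev_eq_decide]

lemma hpaylen (m : ℕ) : Primrec (paylen m) := hsz.comp (list_length.comp (hdevList m))

lemma hseg : Primrec (fun q : List Bool × ℕ × ℕ => seg q.1 q.2.1 q.2.2) := by
  have inner : Primrec (fun w : (List Bool × ℕ × ℕ) × ℕ => w.1.1.getD (w.1.2.1 + w.2) false) :=
    (list_getD false).comp (fst.comp fst) (nat_add.comp (fst.comp (snd.comp fst)) snd)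
  exact (list_map (list_range.comp (snd.comp snd)) inner.to₂).of_eq (fun q => rfl)

lemma hnOf : Primrec nOf :=
  (hval.comp (hseg.comp (Primrec.pair Primrec.id
    (Primrec.pair (succ.comp hleading) hleading)))).of_eq (fun p => rfl)

lemma hiOf (m : ℕ) : Primrec (iOf m) :=
  (hval.comp (hseg.comp (Primrec.pair Primrec.id
    (Primrec.pair (succ.comp (nat_mul.comp (const 2) hleading))
      ((hpaylen m).comp hnOf))))).of_eq (fun p => rfl)

lemma hokCode (m : ℕ) : Primrec (okCode m) := by
  have h1 : Primrec (fun p : List Bool =>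
      decide (p.length = 2 * leading p + 1 + paylen m (nOf p))) :=
    PrimrecPred.decide (Primrec.eq.comp list_length
      (nat_add.comp (nat_add.comp (nat_mul.comp (const 2) hleading) (const 1))
        ((hpaylen m).comp hnOf)))
  exact h1.of_eq (fun p => rfl)

lemma hresult (m : ℕ) : Primrec (result m) :=
  ((list_getD ([] : List Bool)).comp ((hdevList m).comp hnOf) (hiOf m)).of_eq (fun p => rfl)

lemma hisPre : Primrec₂ isPre := by
  have a1 : Primrec (fun q : List Bool × List Bool => decide (q.1.length ≤ q.2.length)) :=
    PrimrecPred.decide (nat_le.comp (list_length.comp fst) (list_length.comp snd))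
  have a2 : Primrec (fun q : List Bool × List Bool => decide (seg q.2 0 q.1.length = q.1)) :=
    PrimrecPred.decide (Primrec.eq.comp (hseg.comp (Primrec.pair snd
      (Primrec.pair (const 0) (list_length.comp fst)))) fst)
  exact (Primrec.and.comp a1 a2).of_eq (fun q => rfl)

lemma list_any_eq_foldr {α : Type*} (l : List α) (f : α → Bool) :
    l.any f = l.foldr (fun a r => f a || r) false := by
  induction l with
  | nil => rfl
  | cons a l ih => simp [ih]

lemma hRm (m : ℕ) : Primrec (fun q : List Bool × List Bool => Rm m q.1 q.2) := by
  have segq : Primrec (fun w : (List Bool × List Bool) × ℕ × Bool => seg w.1.1 0 w.2.1) :=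
    hseg.comp (Primrec.pair (fst.comp fst) (Primrec.pair (const 0) (fst.comp snd)))
  have hh : Primrec (fun w : (List Bool × List Bool) × ℕ × Bool =>
      (okCode m (seg w.1.1 0 w.2.1) && isPre w.1.2 (result m (seg w.1.1 0 w.2.1))) || w.2.2) :=
    Primrec.or.comp
      (Primrec.and.comp ((hokCode m).comp segq)
        (hisPre.comp (snd.comp fst) ((hresult m).comp segq)))
      (snd.comp snd)
  have h := list_foldr (list_range.comp (succ.comp (list_length.comp fst)))
    (const false) hh.to₂
  apply h.of_eq
  intro q
  exact (list_any_eq_foldr (List.range (q.1.length + 1))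
    (fun j => okCode m (seg q.1 0 j) && isPre q.2 (result m (seg q.1 0 j)))).symm

end computability


lemma RePred_R (m : ℕ) : REPred (fun q : List Bool × List Bool => Rpred m q.1 q.2) := by
  apply ComputablePred.to_re
  rw [ComputablePred.computable_iff]
  exact ⟨fun q => Rm m q.1 q.2, (hRm m).to_comp, rfl⟩

lemma hsz_littleo : (fun n : ℕ => (sz n : ℝ)) =o[atTop] (fun n : ℕ => (n:ℝ)) := by
  have hb : (fun x : ℝ => Real.log x + 1) =o[atTop] (fun x : ℝ => x) := by
    simpa [Function.id_def] using
      Real.isLittleO_log_id_atTop.add (Asymptotics.isLittleO_const_id_atTop (1:ℝ))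
  have hcomp := hb.comp_tendsto tendsto_natCast_atTop_atTop
  apply Asymptotics.IsBigO.trans_isLittleO _ hcomp
  rw [Asymptotics.isBigO_iff]
  refine ⟨2, ?_⟩
  filter_upwards [eventually_ge_atTop 1] with n hn
  have hszlog : sz n ≤ Nat.log 2 n + 1 := sz_le (Nat.lt_pow_succ_log_self one_lt_two n)
  have hlogle : (Nat.log 2 n : ℝ) ≤ Real.log n / Real.log 2 := by
    have h2 : (2:ℝ)^(Nat.log 2 n) ≤ (n:ℝ) := by exact_mod_cast Nat.pow_log_le_self 2 (by omega)
    have h3 := Real.log_le_log (by positivity) h2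
    rw [Real.log_pow] at h3
    rw [le_div_iff₀ (Real.log_pos one_lt_two)]
    linarith
  have hlogn0 : 0 ≤ Real.log n := Real.log_nonneg (by exact_mod_cast hn)
  have habs1 : ‖(fun n : ℕ => (sz n : ℝ)) n‖ = (sz n : ℝ) := by
    simp [Real.norm_eq_abs, abs_of_nonneg]
  rw [Function.comp]
  rw [Real.norm_eq_abs, Real.norm_eq_abs, abs_of_nonneg (by positivity),
    abs_of_nonneg (by positivity)]
  have hs : (sz n : ℝ) ≤ (Nat.log 2 n : ℝ) + 1 := by exact_mod_cast hszlog
  have hdiv : Real.log n / Real.log 2 ≤ 2 * Real.log n := by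
    rw [div_le_iff₀ (Real.log_pos one_lt_two)]
    nlinarith [Real.log_two_gt_d9]
  linarith

end SLLN

open SLLN in
/-- if `ρ` is computable, unbounded, nondecreasing with `ρ(n) = o(n)`, then every
`ω` with `Km(ω^n) ≥ n - ρ(n) - O(1)` satisfies the strong law of large numbers. -/
theorem stmt_11 (R : List Bool → List Bool → Prop) (hR : MonotoneOptimal R)
    (ρ : ℕ → ℕ) (hρc : Computable ρ) (hρm : Monotone ρ) (hρu : ∀ c : ℕ, ∃ n, c < ρ n)
    (hρo : (fun n => (ρ n : ℝ)) =o[atTop] fun n => (n : ℝ))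
    (ω : ℕ → Bool)
    (hω : ∃ c : ℕ, ∀ n : ℕ, (n : ℤ) - (ρ n : ℤ) - (c : ℤ) ≤ (KmR R (pref ω n) : ℤ)) :
    Tendsto (fun n => ((pref ω n).count true : ℝ) / n) atTop (nhds (1 / 2)) := by
  obtain ⟨c, hc⟩ := hω
  have hopt := hR.2
  -- Step 1: for every m ≥ 1, eventually the n-prefix of ω is not (1/2m)-deviant
  have hdev : ∀ m : ℕ, 1 ≤ m → ∀ᶠ n in atTop, isDev m n (pref ω n) = false := by
    intro m hm
    by_contra hfreq
    rw [Filter.not_eventually] at hfreq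
    replace hfreq : ∃ᶠ n in atTop, isDev m n (pref ω n) = true := by
      apply hfreq.mono
      intro n h
      simpa using h
    obtain ⟨c', hc'⟩ := hopt (Rpred m) ⟨RePred_R m, mono2 m, mono3 m⟩
    obtain ⟨M, hM1, hMb⟩ := devLen_bound m hm
    have hkey : ∀ n, isDev m n (pref ω n) = true →
        (n : ℝ) < (M:ℝ) * ((ρ n : ℝ) + 2 * (sz n : ℝ) + ((c:ℝ) + c' + 3)) + M := by
      intro n hdevn
      have hmem : pref ω n ∈ devList m n := by
        rw [devList, List.mem_filter]
        exact ⟨mem_E.mpr (by simp [pref]), hdevn⟩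
      obtain ⟨p, hp, hplen⟩ := covers hmem
      have h1 : KmR R (pref ω n) ≤ p.length + c' := hc' _ _ hp
      rw [hplen] at h1
      have h2 := hc n
      have hpay : paylen m n ≤ n + 2 - n / M := sz_le (hMb n)
      have hnM : n / M ≤ n := Nat.div_le_self n M
      have h3 : (n / M : ℤ) ≤ (ρ n : ℤ) + 2 * sz n + ((c:ℤ) + c' + 3) := by
        have hcast : ((n + 2 - n / M : ℕ) : ℤ) = (n:ℤ) + 2 - ((n / M : ℕ) : ℤ) := by
          push_cast [Nat.cast_sub (by omega : n / M ≤ n + 2)]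
          ring
        have h1' : (KmR R (pref ω n) : ℤ) ≤ 2 * (sz n : ℤ) + 1 + (paylen m n : ℤ) + c' := by
          exact_mod_cast h1
        have hpay' : (paylen m n : ℤ) ≤ (n:ℤ) + 2 - ((n / M : ℕ) : ℤ) := by
          rw [← hcast]
          exact_mod_cast hpay
        omega
      have h4 : n < M * (n / M) + M := by
        have ha := Nat.mod_lt n (show 0 < M by omega)
        have hb := Nat.div_add_mod n M
        omega
      have h3' : ((n / M : ℕ) : ℝ) ≤ (ρ n : ℝ) + 2 * (sz n : ℝ) + ((c:ℝ) + c' + 3) := by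
        exact_mod_cast h3
      have h4' : (n : ℝ) < (M:ℝ) * ((n / M : ℕ) : ℝ) + M := by exact_mod_cast h4
      have hM0 : (0:ℝ) ≤ (M:ℝ) := by positivity
      nlinarith [h3', h4', hM0]
    have hconst : (fun _ : ℕ => (1:ℝ)) =o[atTop] (fun n : ℕ => (n:ℝ)) :=
      (Asymptotics.isLittleO_const_id_atTop (1:ℝ)).comp_tendsto tendsto_natCast_atTop_atTop
    have hG : (fun n : ℕ => (M:ℝ) * ((ρ n : ℝ) + 2 * (sz n : ℝ) + ((c:ℝ) + c' + 3)) + M)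
        =o[atTop] (fun n : ℕ => (n:ℝ)) := by
      have hsum : (fun n : ℕ => (ρ n : ℝ) + 2 * (sz n : ℝ) + ((c:ℝ) + c' + 3))
          =o[atTop] (fun n : ℕ => (n:ℝ)) := by
        refine (hρo.add (hsz_littleo.const_mul_left 2)).add ?_
        simpa using hconst.const_mul_left ((c:ℝ) + c' + 3)
      refine (hsum.const_mul_left M).add ?_
      simpa using hconst.const_mul_left (M:ℝ)
    have hev := hG.def (by norm_num : (0:ℝ) < 1/2)
    obtain ⟨n, hn1, hn2, hn3⟩ :=
      (hfreq.and_eventually (hev.and (eventually_ge_atTop 1))).exists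
    have hkn := hkey n hn1
    have hnR : (1:ℝ) ≤ (n:ℝ) := by exact_mod_cast hn3
    rw [Real.norm_eq_abs, Real.norm_eq_abs, abs_of_nonneg (by positivity : (0:ℝ) ≤ (n:ℝ))] at hn2
    have hle := le_abs_self ((M:ℝ) * ((ρ n : ℝ) + 2 * (sz n : ℝ) + ((c:ℝ) + c' + 3)) + M)
    linarith
  -- Step 2: conclude the SLLN
  rw [Metric.tendsto_atTop]
  intro ε hε
  obtain ⟨m, hm1, hm2⟩ : ∃ m : ℕ, 1 ≤ m ∧ 1/ε < (m:ℝ) :=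
    ⟨⌈1/ε⌉₊ + 1, by omega, by push_cast; linarith [Nat.le_ceil (1/ε)]⟩
  have hm0 : (0:ℝ) < (m:ℝ) := by positivity
  have hmε : 1 < ε * m := by
    calc (1:ℝ) = ε * (1/ε) := by field_simp
      _ < ε * m := by
        apply mul_lt_mul_of_pos_left hm2 hε
  obtain ⟨N, hN⟩ := Filter.eventually_atTop.mp ((hdev m hm1).and (eventually_ge_atTop 1))
  refine ⟨N, fun n hn => ?_⟩
  obtain ⟨hdevn, hn1⟩ := hN n hn
  have hn0 : (0:ℝ) < (n:ℝ) := by exact_mod_cast hn1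
  set wn : ℕ := wt (pref ω n) with hwn
  have hcnt : (pref ω n).count true = wn := (wt_eq_count _).symm
  rw [isDev_eq_decide, decide_eq_false_iff_not, not_or, Nat.not_le, Nat.not_le] at hdevn
  obtain ⟨hd1, hd2⟩ := hdevn
  -- |2 wn - n| * m < n  in ℝ
  have habs : |2*(wn:ℝ) - n| * m < n := by
    rcases le_total n (2*wn) with h | h
    · have hd1' : m * (2*wn - n) < n := hd1
      have : ((m * (2*wn - n) : ℕ) : ℝ) < (n:ℝ) := by exact_mod_cast hd1'
      rw [abs_of_nonneg (by
        have : (n:ℝ) ≤ 2*(wn:ℝ) := by exact_mod_cast h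
        linarith)]
      push_cast [Nat.cast_sub h] at this
      linarith
    · have hd2' : m * (n - 2*wn) < n := hd2
      have : ((m * (n - 2*wn) : ℕ) : ℝ) < (n:ℝ) := by exact_mod_cast hd2'
      rw [abs_of_nonpos (by
        have : 2*(wn:ℝ) ≤ (n:ℝ) := by exact_mod_cast h
        linarith)]
      push_cast [Nat.cast_sub h] at this
      linarith
  have h5 : |2*(wn:ℝ) - n| < (n:ℝ) * ε := by
    nlinarith [abs_nonneg (2*(wn:ℝ) - n)]
  rw [Real.dist_eq, hcnt]
  have heq : (wn:ℝ)/n - 1/2 = (2*(wn:ℝ) - n)/(2*n) := by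
    field_simp
  rw [heq, abs_div, abs_of_pos (by linarith : (0:ℝ) < 2*(n:ℝ))]
  rw [div_lt_iff₀ (by linarith : (0:ℝ) < 2*(n:ℝ))]
  nlinarith [h5]
end

section
/- Let L be the uniform Bernoulli measure on {0,1}^∞ and S_k = ∑_{i=1}^k ω_i. For every m ≥ 1 and every real a, L{ω : max_{1≤k≤m} (S_k − k/2) > a} ≤ 2·L{ω : S_m − m/2 > a}. -/
open MeasureTheory Filter Asymptotics
open scoped ENNReal

/-- `S_k(ω) = ∑_{i=1}^k ω_i`, the number of ones among the first `k` bits. -/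
def S (ω : ℕ → Bool) (k : ℕ) : ℕ := (pref ω k).count true

namespace Stmt14

lemma pref_length (ω : ℕ → Bool) (n : ℕ) : (pref ω n).length = n := by simp [pref]

lemma mem_Cyl_iff (x : List Bool) (ω : ℕ → Bool) :
    ω ∈ Cyl x ↔ ∀ i (h : i < x.length), ω i = x[i] := by
  constructor
  · intro hx i h
    have : (pref ω x.length)[i]'(by simpa [pref_length] using h) = x[i] :=
      List.getElem_of_eq hx _
    simpa [pref] using this
  · intro h
    refine List.ext_getElem (by simp [pref_length]) ?_
    intro i h1 h2
    simpa [pref] using h i h2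

lemma S_eq (ω : ℕ → Bool) (k : ℕ) :
    S ω k = ((Finset.range k).filter (fun i => ω i = true)).card := by
  induction k with
  | zero => simp [S, pref]
  | succ k ih =>
    have hp : pref ω (k+1) = pref ω k ++ [ω k] := by
      simp [pref, List.range_succ]
    have : S ω (k+1) = S ω k + List.count true [ω k] := by
      rw [S, hp, List.count_append]; rfl
    rw [this, ih, Finset.range_add_one, Finset.filter_insert]
    cases h : ω k <;> simp [h, Finset.card_insert_of_notMem]

lemma measurableSet_Cyl (x : List Bool) : MeasurableSet (Cyl x) := by
  have : Cyl x = ⋂ i ∈ Finset.range x.length, {ω : ℕ → Bool | ω i = x.getD i false} := by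
    ext ω
    simp only [mem_Cyl_iff, Set.mem_iInter, Set.mem_setOf_eq, Finset.mem_range]
    constructor
    · intro h i hi; rw [h i hi, List.getD_eq_getElem _ _ hi]
    · intro h i hi; rw [h i hi, List.getD_eq_getElem _ _ hi]
  rw [this]
  refine Finset.measurableSet_biInter _ (fun i hi => ?_)
  have h2 : {ω : ℕ → Bool | ω i = x.getD i false} =
      (fun ω : ℕ → Bool => ω i) ⁻¹' {x.getD i false} := rfl
  rw [h2]
  exact measurable_pi_apply i (MeasurableSet.singleton _)

def cnt (m : ℕ) (f : Fin m → Bool) (k : ℕ) : ℕ :=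
  (Finset.univ.filter (fun i : Fin m => i.1 < k ∧ f i = true)).card

def rf (m k : ℕ) (f : Fin m → Bool) : Fin m → Bool :=
  fun i => if i.1 < k then f i else !(f i)

lemma cnt_congr {m k : ℕ} {f g : Fin m → Bool} (h : ∀ i : Fin m, i.1 < k → f i = g i) :
    cnt m f k = cnt m g k := by
  unfold cnt
  congr 1
  refine Finset.filter_congr fun i _ => ?_
  by_cases hik : i.1 < k
  · simp [hik, h i hik]
  · simp [hik]

lemma card_lt (m k : ℕ) (hk : k ≤ m) :
    (Finset.univ.filter (fun i : Fin m => i.1 < k)).card = k := by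
  have h : (Finset.univ.filter (fun i : Fin m => i.1 < k)).card = (Finset.range k).card := by
    refine Finset.card_bij (fun (i : Fin m) _ => i.1) ?_ ?_ ?_
    · intro i hi; simp only [Finset.mem_filter] at hi; simp [hi.2]
    · intro i _ j _ h; exact Fin.ext h
    · intro j hj
      simp only [Finset.mem_range] at hj
      exact ⟨⟨j, lt_of_lt_of_le hj hk⟩, by simp [hj], rfl⟩
  simpa using h

lemma cnt_split (m k : ℕ) (f : Fin m → Bool) :
    cnt m f m = cnt m f k +
      (Finset.univ.filter (fun i : Fin m => ¬ i.1 < k ∧ f i = true)).card := by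
  have h1 : cnt m f m = (Finset.univ.filter (fun i : Fin m => f i = true)).card := by
    unfold cnt; congr 1; refine Finset.filter_congr fun i _ => by simp [i.2]
  rw [h1, ← Finset.card_filter_add_card_filter_not
    (p := fun i : Fin m => i.1 < k) (s := Finset.univ.filter (fun i : Fin m => f i = true))]
  congr 1 <;> · congr 1; simp [Finset.filter_filter, and_comm]

lemma tail_split (m k : ℕ) (hk : k ≤ m) (f : Fin m → Bool) :
    (Finset.univ.filter (fun i : Fin m => ¬ i.1 < k ∧ f i = true)).card +
    (Finset.univ.filter (fun i : Fin m => ¬ i.1 < k ∧ f i = false)).card = m - k := by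
  have h0 : (Finset.univ.filter (fun i : Fin m => ¬ i.1 < k)).card = m - k := by
    have := Finset.card_filter_add_card_filter_not
      (p := fun i : Fin m => i.1 < k) (s := (Finset.univ : Finset (Fin m)))
    rw [card_lt m k hk] at this
    simp only [Finset.card_univ, Fintype.card_fin] at this
    omega
  rw [← h0, ← Finset.card_filter_add_card_filter_not
    (p := fun i : Fin m => f i = true) (s := Finset.univ.filter (fun i : Fin m => ¬ i.1 < k))]
  congr 1 <;> · congr 1; simp [Finset.filter_filter, and_comm]

lemma refl_key (m k : ℕ) (hk : k ≤ m) (f : Fin m → Bool) :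
    cnt m (rf m k f) m + cnt m f m = 2 * cnt m f k + (m - k) := by
  have e1 : cnt m (rf m k f) k = cnt m f k :=
    cnt_congr (fun i hi => by simp [rf, hi])
  have e2 : (Finset.univ.filter (fun i : Fin m => ¬ i.1 < k ∧ rf m k f i = true)) =
      (Finset.univ.filter (fun i : Fin m => ¬ i.1 < k ∧ f i = false)) := by
    refine Finset.filter_congr fun i _ => ?_
    by_cases hik : i.1 < k
    · simp [hik]
    · simp [rf, hik]
  rw [cnt_split m k (rf m k f), cnt_split m k f, e1, e2]
  have := tail_split m k hk f
  omega

lemma S_eq_cnt {m : ℕ} (f : Fin m → Bool) (ω : ℕ → Bool)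
    (hω : ω ∈ Cyl (List.ofFn f)) {k : ℕ} (hk : k ≤ m) : S ω k = cnt m f k := by
  have hωf : ∀ i : Fin m, ω i.1 = f i := by
    intro i
    have := (mem_Cyl_iff _ ω).mp hω i.1 (by simpa using i.2)
    simpa using this
  rw [S_eq, cnt]
  refine (Finset.card_bij (fun (i : Fin m) _ => i.1) ?_ ?_ ?_).symm
  · intro i hi
    simp only [Finset.mem_filter, Finset.mem_univ, true_and] at hi
    simp only [Finset.mem_filter, Finset.mem_range]
    exact ⟨hi.1, by rw [hωf i]; exact hi.2⟩
  · intro i _ j _ h; exact Fin.ext h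
  · intro j hj
    simp only [Finset.mem_filter, Finset.mem_range] at hj
    refine ⟨⟨j, lt_of_lt_of_le hj.1 hk⟩, ?_, rfl⟩
    simp only [Finset.mem_filter, Finset.mem_univ, true_and]
    exact ⟨hj.1, by rw [← hωf ⟨j, _⟩]; exact hj.2⟩

lemma mem_Cyl_ofFn_self {m : ℕ} (ω : ℕ → Bool) :
    ω ∈ Cyl (List.ofFn (fun i : Fin m => ω i.1)) := by
  rw [mem_Cyl_iff]
  intro i h
  simp

end Stmt14

/-- reflection/maximal inequality
`L{max_{1≤k≤m}(S_k - k/2) > a} ≤ 2·L{S_m - m/2 > a}` for the fair-coin measure. -/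
theorem stmt_14 (μ : Measure (ℕ → Bool))
    (hμ : ∀ x : List Bool, μ (Cyl x) = (2 : ℝ≥0∞)⁻¹ ^ x.length)
    (m : ℕ) (hm : 1 ≤ m) (a : ℝ) :
    μ {ω : ℕ → Bool | ∃ k : ℕ, 1 ≤ k ∧ k ≤ m ∧ (S ω k : ℝ) - k / 2 > a} ≤
      2 * μ {ω : ℕ → Bool | (S ω m : ℝ) - m / 2 > a} := by
  classical
  open Stmt14 in
  set P : (Fin m → Bool) → Prop :=
    fun f => ∃ k : ℕ, 1 ≤ k ∧ k ≤ m ∧ (Stmt14.cnt m f k : ℝ) - k / 2 > a with hPdef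
  set Q : (Fin m → Bool) → Prop :=
    fun f => (Stmt14.cnt m f m : ℝ) - m / 2 > a with hQdef
  set G : Finset (Fin m → Bool) := Finset.univ.filter P with hGdef
  set G' : Finset (Fin m → Bool) := Finset.univ.filter Q with hG'def
  -- measure of finite disjoint unions of length-m cylinders
  have hmeas : ∀ T : Finset (Fin m → Bool),
      μ (⋃ f ∈ T, Cyl (List.ofFn f)) = T.card * (2 : ℝ≥0∞)⁻¹ ^ m := by
    intro T
    rw [measure_biUnion_finset ?_ (fun f _ => Stmt14.measurableSet_Cyl _)]
    · have : ∀ f ∈ T, μ (Cyl (List.ofFn f)) = (2 : ℝ≥0∞)⁻¹ ^ m := by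
        intro f _; rw [hμ]; simp
      rw [Finset.sum_congr rfl this, Finset.sum_const, nsmul_eq_mul]
    · intro f _ g _ hfg
      refine Set.disjoint_left.mpr fun ω hf hg => hfg ?_
      have h1 : pref ω m = List.ofFn f := by
        have := hf; unfold Cyl PrefixOf at this; simpa using this
      have h2 : pref ω m = List.ofFn g := by
        have := hg; unfold Cyl PrefixOf at this; simpa using this
      exact List.ofFn_injective (h1 ▸ h2)
  -- set decompositions
  have hA : {ω : ℕ → Bool | ∃ k : ℕ, 1 ≤ k ∧ k ≤ m ∧ (S ω k : ℝ) - k / 2 > a} =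
      ⋃ f ∈ G, Cyl (List.ofFn f) := by
    ext ω
    simp only [Set.mem_setOf_eq, Set.mem_iUnion, exists_prop]
    constructor
    · rintro ⟨k, hk1, hkm, hka⟩
      refine ⟨fun i : Fin m => ω i.1, ?_, Stmt14.mem_Cyl_ofFn_self ω⟩
      rw [hGdef, Finset.mem_filter]
      refine ⟨Finset.mem_univ _, k, hk1, hkm, ?_⟩
      rwa [← Stmt14.S_eq_cnt _ ω (Stmt14.mem_Cyl_ofFn_self ω) hkm]
    · rintro ⟨f, hfG, hω⟩
      rw [hGdef, Finset.mem_filter] at hfG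
      obtain ⟨-, k, hk1, hkm, hka⟩ := hfG
      exact ⟨k, hk1, hkm, by rwa [Stmt14.S_eq_cnt f ω hω hkm]⟩
  have hB : {ω : ℕ → Bool | (S ω m : ℝ) - m / 2 > a} = ⋃ f ∈ G', Cyl (List.ofFn f) := by
    ext ω
    simp only [Set.mem_setOf_eq, Set.mem_iUnion, exists_prop]
    constructor
    · intro hka
      refine ⟨fun i : Fin m => ω i.1, ?_, Stmt14.mem_Cyl_ofFn_self ω⟩
      rw [hG'def, Finset.mem_filter]
      refine ⟨Finset.mem_univ _, ?_⟩
      simp only [hQdef]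
      rwa [← Stmt14.S_eq_cnt _ ω (Stmt14.mem_Cyl_ofFn_self ω) le_rfl]
    · rintro ⟨f, hfG, hω⟩
      rw [hG'def, Finset.mem_filter] at hfG
      have := hfG.2
      rwa [Stmt14.S_eq_cnt f ω hω le_rfl]
  -- combinatorial core: card G ≤ 2 * card G'
  have hcard : G.card ≤ 2 * G'.card := by
    set τ : (Fin m → Bool) → ℕ := fun f => if h : P f then Nat.find h else 0 with hτdef
    have τspec : ∀ f (hf : P f),
        1 ≤ τ f ∧ τ f ≤ m ∧ (Stmt14.cnt m f (τ f) : ℝ) - (τ f) / 2 > a := by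
      intro f hf
      simp only [hτdef, dif_pos hf]
      exact Nat.find_spec hf
    have τmin : ∀ f (hf : P f) (j : ℕ),
        (1 ≤ j ∧ j ≤ m ∧ (Stmt14.cnt m f j : ℝ) - j / 2 > a) → τ f ≤ j := by
      intro f hf j hj
      simp only [hτdef, dif_pos hf]
      exact Nat.find_le hj
    have hsplit := Finset.card_filter_add_card_filter_not (p := Q) (s := G)
    have h1 : (G.filter Q).card ≤ G'.card := by
      apply Finset.card_le_card
      intro f hf
      rw [Finset.mem_filter] at hf
      rw [hG'def, Finset.mem_filter]
      exact ⟨Finset.mem_univ _, hf.2⟩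
    have h2 : (G.filter (fun f => ¬ Q f)).card ≤ G'.card := by
      refine Finset.card_le_card_of_injOn (fun f => Stmt14.rf m (τ f) f) ?_ ?_
      · -- maps into G'
        intro f hf
        rw [Finset.mem_coe, Finset.mem_filter, hGdef, Finset.mem_filter] at hf
        obtain ⟨⟨-, hP⟩, hnQ⟩ := hf
        obtain ⟨hτ1, hτm, hτa⟩ := τspec f hP
        rw [Finset.mem_coe, hG'def, Finset.mem_filter]
        refine ⟨Finset.mem_univ _, ?_⟩
        rw [hQdef]
        have hkey := Stmt14.refl_key m (τ f) hτm f
        have hcast : (Stmt14.cnt m (Stmt14.rf m (τ f) f) m : ℝ) + Stmt14.cnt m f m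
            = 2 * Stmt14.cnt m f (τ f) + ((m : ℝ) - τ f) := by
          have := congrArg (Nat.cast : ℕ → ℝ) hkey
          push_cast [Nat.cast_sub hτm] at this
          linarith [this]
        have hQ' : (Stmt14.cnt m f m : ℝ) - m / 2 ≤ a := not_lt.mp hnQ
        show (Stmt14.cnt m (Stmt14.rf m (τ f) f) m : ℝ) - m / 2 > a
        linarith
      · -- injective
        intro f hf g hg hfg
        rw [Finset.mem_coe, Finset.mem_filter, hGdef, Finset.mem_filter] at hf hg
        have hPf := hf.1.2
        have hPg := hg.1.2
        simp only at hfg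
        have key : ∀ f g (hPf : P f) (hPg : P g),
            Stmt14.rf m (τ f) f = Stmt14.rf m (τ g) g → τ f ≤ τ g → τ g ≤ τ f := by
          intro f g hPf hPg hfg hle
          obtain ⟨hτ1, hτm, hτa⟩ := τspec f hPf
          have hbits : ∀ i : Fin m, i.1 < τ f → f i = g i := by
            intro i hi
            have h1 : Stmt14.rf m (τ f) f i = f i := by simp [Stmt14.rf, hi]
            have h2 : Stmt14.rf m (τ g) g i = g i := by
              simp [Stmt14.rf, lt_of_lt_of_le hi hle]
            rw [← h1, hfg, h2]
          have : (Stmt14.cnt m g (τ f) : ℝ) - (τ f) / 2 > a := by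
            rwa [Stmt14.cnt_congr (fun i hi => (hbits i hi).symm)]
          exact τmin g hPg (τ f) ⟨hτ1, hτm, this⟩
        have hττ : τ f = τ g := by
          rcases le_total (τ f) (τ g) with h | h
          · exact le_antisymm h (key f g hPf hPg hfg h)
          · exact le_antisymm (key g f hPg hPf hfg.symm h) h
        funext i
        have := congrFun hfg i
        rw [hττ] at this
        by_cases hi : i.1 < τ g
        · simpa [Stmt14.rf, hi] using this
        · simp only [Stmt14.rf, if_neg hi] at this
          exact Bool.not_inj this
    omega
  -- assemble
  rw [hA, hB, hmeas G, hmeas G', ← mul_assoc]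
  refine mul_le_mul_left ?_ _
  calc (G.card : ℝ≥0∞) ≤ ((2 * G'.card : ℕ) : ℝ≥0∞) := by exact_mod_cast hcard
    _ = 2 * G'.card := by push_cast; ring
end
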